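/- arXiv:1308.6392 — 5 statements merged into one kernel-verified Lean document; each statement's English description precedes it below -/
import Mathlib

section
/- For every fixed τ ∈ ℝ and ξ = (ξ₁,ξ₂) ∈ ℝ², the kernel K satisfies, at every (t,x) with t > τ and x = (x₁,x₂) ∈ ℝ², the adjoint partial differential equation −∂K/∂t − C₁·∂K/∂x₁ − C₂·∂K/∂x₂ + (1/2)·(σ₁²·∂²K/∂x₁² + σ₂²·∂²K/∂x₂²) − λ·K = 0 (all partial derivatives taken in the variables (t,x)). -/
open Real

/-- Auxiliary Gaussian-type "monomial": one of the four signed terms of the kernel. -/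
noncomputable def Mk (β α₁ α₂ b₁ b₂ k₁ k₂ m₁ m₂ s y₁ y₂ : ℝ) : ℝ :=
  s⁻¹ * Real.exp (β * s + α₁ * (y₁ - k₁) + α₂ * (y₂ - k₂))
    * Real.exp (-(y₁ - m₁) ^ 2 / (b₁ * s))
    * Real.exp (-(y₂ - m₂) ^ 2 / (b₂ * s))

lemma Mk_y1 (β α₁ α₂ b₁ b₂ k₁ k₂ m₁ m₂ s y₁ y₂ : ℝ) :
    HasDerivAt (fun y => Mk β α₁ α₂ b₁ b₂ k₁ k₂ m₁ m₂ s y y₂)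
      ((α₁ - 2 * (y₁ - m₁) / (b₁ * s)) * Mk β α₁ α₂ b₁ b₂ k₁ k₂ m₁ m₂ s y₁ y₂) y₁ := by
  have h1 : HasDerivAt (fun y : ℝ => s⁻¹ * Real.exp (β * s + α₁ * (y - k₁) + α₂ * (y₂ - k₂)))
      (s⁻¹ * (Real.exp (β * s + α₁ * (y₁ - k₁) + α₂ * (y₂ - k₂)) * (α₁ * 1))) y₁ :=
    (((((hasDerivAt_id y₁).sub_const k₁).const_mul α₁).const_add (β * s)).add_const
      (α₂ * (y₂ - k₂))).exp.const_mul s⁻¹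
  have h2 : HasDerivAt (fun y : ℝ => Real.exp (-(y - m₁) ^ 2 / (b₁ * s)))
      (Real.exp (-(y₁ - m₁) ^ 2 / (b₁ * s)) * (-(2 * (y₁ - m₁) ^ 1 * 1) / (b₁ * s))) y₁ :=
    ((((hasDerivAt_id y₁).sub_const m₁).pow 2).neg.div_const (b₁ * s)).exp
  have h := (h1.mul h2).mul_const (Real.exp (-(y₂ - m₂) ^ 2 / (b₂ * s)))
  refine h.congr_deriv ?_
  unfold Mk
  ring

lemma Mk_y2 (β α₁ α₂ b₁ b₂ k₁ k₂ m₁ m₂ s y₁ y₂ : ℝ) :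
    HasDerivAt (fun y => Mk β α₁ α₂ b₁ b₂ k₁ k₂ m₁ m₂ s y₁ y)
      ((α₂ - 2 * (y₂ - m₂) / (b₂ * s)) * Mk β α₁ α₂ b₁ b₂ k₁ k₂ m₁ m₂ s y₁ y₂) y₂ := by
  have h1 : HasDerivAt (fun y : ℝ => s⁻¹ * Real.exp (β * s + α₁ * (y₁ - k₁) + α₂ * (y - k₂)))
      (s⁻¹ * (Real.exp (β * s + α₁ * (y₁ - k₁) + α₂ * (y₂ - k₂)) * (α₂ * 1))) y₂ :=
    ((((hasDerivAt_id y₂).sub_const k₂).const_mul α₂).const_add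
      (β * s + α₁ * (y₁ - k₁))).exp.const_mul s⁻¹
  have h2 : HasDerivAt (fun y : ℝ => Real.exp (-(y - m₂) ^ 2 / (b₂ * s)))
      (Real.exp (-(y₂ - m₂) ^ 2 / (b₂ * s)) * (-(2 * (y₂ - m₂) ^ 1 * 1) / (b₂ * s))) y₂ :=
    ((((hasDerivAt_id y₂).sub_const m₂).pow 2).neg.div_const (b₂ * s)).exp
  have h := ((h1.mul_const (Real.exp (-(y₁ - m₁) ^ 2 / (b₁ * s)))).mul h2)
  refine h.congr_deriv ?_
  unfold Mk
  ring

lemma Mk_y1' (β α₁ α₂ b₁ b₂ k₁ k₂ m₁ m₂ s y₁ y₂ : ℝ) :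
    HasDerivAt (fun y => (α₁ - 2 * (y - m₁) / (b₁ * s)) * Mk β α₁ α₂ b₁ b₂ k₁ k₂ m₁ m₂ s y y₂)
      (((α₁ - 2 * (y₁ - m₁) / (b₁ * s)) ^ 2 - 2 / (b₁ * s))
        * Mk β α₁ α₂ b₁ b₂ k₁ k₂ m₁ m₂ s y₁ y₂) y₁ := by
  have hlin : HasDerivAt (fun y : ℝ => α₁ - 2 * (y - m₁) / (b₁ * s))
      (-(2 * 1 / (b₁ * s))) y₁ :=
    ((((hasDerivAt_id y₁).sub_const m₁).const_mul 2).div_const (b₁ * s)).const_sub α₁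
  have h := hlin.mul (Mk_y1 β α₁ α₂ b₁ b₂ k₁ k₂ m₁ m₂ s y₁ y₂)
  refine h.congr_deriv ?_
  ring

lemma Mk_y2' (β α₁ α₂ b₁ b₂ k₁ k₂ m₁ m₂ s y₁ y₂ : ℝ) :
    HasDerivAt (fun y => (α₂ - 2 * (y - m₂) / (b₂ * s)) * Mk β α₁ α₂ b₁ b₂ k₁ k₂ m₁ m₂ s y₁ y)
      (((α₂ - 2 * (y₂ - m₂) / (b₂ * s)) ^ 2 - 2 / (b₂ * s))
        * Mk β α₁ α₂ b₁ b₂ k₁ k₂ m₁ m₂ s y₁ y₂) y₂ := by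
  have hlin : HasDerivAt (fun y : ℝ => α₂ - 2 * (y - m₂) / (b₂ * s))
      (-(2 * 1 / (b₂ * s))) y₂ :=
    ((((hasDerivAt_id y₂).sub_const m₂).const_mul 2).div_const (b₂ * s)).const_sub α₂
  have h := hlin.mul (Mk_y2 β α₁ α₂ b₁ b₂ k₁ k₂ m₁ m₂ s y₁ y₂)
  refine h.congr_deriv ?_
  ring

lemma Mk_t (β α₁ α₂ b₁ b₂ k₁ k₂ m₁ m₂ : ℝ) (τ t y₁ y₂ : ℝ) (ht : τ < t)
    (hb₁ : b₁ ≠ 0) (hb₂ : b₂ ≠ 0) :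
    HasDerivAt (fun u => Mk β α₁ α₂ b₁ b₂ k₁ k₂ m₁ m₂ (u - τ) y₁ y₂)
      ((β - (t - τ)⁻¹ + (y₁ - m₁) ^ 2 / (b₁ * (t - τ) ^ 2)
          + (y₂ - m₂) ^ 2 / (b₂ * (t - τ) ^ 2))
        * Mk β α₁ α₂ b₁ b₂ k₁ k₂ m₁ m₂ (t - τ) y₁ y₂) t := by
  have hs : (0:ℝ) < t - τ := sub_pos.2 ht
  have hsne : (t - τ) ≠ 0 := ne_of_gt hs
  have hinv : HasDerivAt (fun u : ℝ => u⁻¹) (-((t - τ) ^ 2)⁻¹) (t - τ) := hasDerivAt_inv hsne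
  have hden₁ : HasDerivAt (fun u : ℝ => b₁ * u) (b₁ * 1) (t - τ) := (hasDerivAt_id _).const_mul b₁
  have hden₂ : HasDerivAt (fun u : ℝ => b₂ * u) (b₂ * 1) (t - τ) := (hasDerivAt_id _).const_mul b₂
  have hg1 : HasDerivAt (fun u : ℝ => β * u + α₁ * (y₁ - k₁) + α₂ * (y₂ - k₂)) (β * 1) (t - τ) :=
    (((hasDerivAt_id _).const_mul β).add_const (α₁ * (y₁ - k₁))).add_const (α₂ * (y₂ - k₂))
  have hg2 : HasDerivAt (fun u : ℝ => -(y₁ - m₁) ^ 2 / (b₁ * u))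
      ((0 * (b₁ * (t - τ)) - -(y₁ - m₁) ^ 2 * (b₁ * 1)) / (b₁ * (t - τ)) ^ 2) (t - τ) :=
    (hasDerivAt_const _ _).div hden₁ (mul_ne_zero hb₁ hsne)
  have hg3 : HasDerivAt (fun u : ℝ => -(y₂ - m₂) ^ 2 / (b₂ * u))
      ((0 * (b₂ * (t - τ)) - -(y₂ - m₂) ^ 2 * (b₂ * 1)) / (b₂ * (t - τ)) ^ 2) (t - τ) :=
    (hasDerivAt_const _ _).div hden₂ (mul_ne_zero hb₂ hsne)
  have h := ((hinv.mul hg1.exp).mul hg2.exp).mul hg3.exp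
  have h2 := h.comp t ((hasDerivAt_id t).sub_const τ)
  have h3 : HasDerivAt (fun u => Mk β α₁ α₂ b₁ b₂ k₁ k₂ m₁ m₂ (u - τ) y₁ y₂)
      ((((-((t - τ) ^ 2)⁻¹ * Real.exp (β * (t - τ) + α₁ * (y₁ - k₁) + α₂ * (y₂ - k₂))
            + (t - τ)⁻¹ * (Real.exp (β * (t - τ) + α₁ * (y₁ - k₁) + α₂ * (y₂ - k₂)) * (β * 1)))
              * Real.exp (-(y₁ - m₁) ^ 2 / (b₁ * (t - τ)))
          + (t - τ)⁻¹ * Real.exp (β * (t - τ) + α₁ * (y₁ - k₁) + α₂ * (y₂ - k₂))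
              * (Real.exp (-(y₁ - m₁) ^ 2 / (b₁ * (t - τ)))
                * ((0 * (b₁ * (t - τ)) - -(y₁ - m₁) ^ 2 * (b₁ * 1)) / (b₁ * (t - τ)) ^ 2)))
            * Real.exp (-(y₂ - m₂) ^ 2 / (b₂ * (t - τ)))
        + (t - τ)⁻¹ * Real.exp (β * (t - τ) + α₁ * (y₁ - k₁) + α₂ * (y₂ - k₂))
            * Real.exp (-(y₁ - m₁) ^ 2 / (b₁ * (t - τ)))
            * (Real.exp (-(y₂ - m₂) ^ 2 / (b₂ * (t - τ)))
              * ((0 * (b₂ * (t - τ)) - -(y₂ - m₂) ^ 2 * (b₂ * 1)) / (b₂ * (t - τ)) ^ 2))) * 1) t := by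
    refine h2.congr_deriv ?_
    simp only [Pi.mul_apply]
  convert h3 using 1
  unfold Mk
  field_simp
  ring

/-- The kernel `K(t,x;τ,ξ)` from Theorem 3 of the paper:
`exp(β(t−τ) + α₁(x₁−ξ₁) + α₂(x₂−ξ₂)) · ∏ᵢ (2πσᵢ²(t−τ))^{−1/2} ·
  [exp(−(xᵢ−ξᵢ)²/(2σᵢ²(t−τ))) − exp(−(xᵢ+ξᵢ)²/(2σᵢ²(t−τ)))]`
with `αᵢ = Cᵢ/σᵢ²` and `β = −(λ + C₁²/(2σ₁²) + C₂²/(2σ₂²))`. -/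
noncomputable def Kker (C₁ C₂ σ₁ σ₂ lam : ℝ) (t : ℝ) (x : ℝ × ℝ) (τ : ℝ) (ξ : ℝ × ℝ) : ℝ :=
  Real.exp ((-(lam + C₁ ^ 2 / (2 * σ₁ ^ 2) + C₂ ^ 2 / (2 * σ₂ ^ 2))) * (t - τ)
      + (C₁ / σ₁ ^ 2) * (x.1 - ξ.1) + (C₂ / σ₂ ^ 2) * (x.2 - ξ.2))
    * ((Real.sqrt (2 * Real.pi * σ₁ ^ 2 * (t - τ)))⁻¹
        * (Real.exp (-(x.1 - ξ.1) ^ 2 / (2 * σ₁ ^ 2 * (t - τ)))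
            - Real.exp (-(x.1 + ξ.1) ^ 2 / (2 * σ₁ ^ 2 * (t - τ)))))
    * ((Real.sqrt (2 * Real.pi * σ₂ ^ 2 * (t - τ)))⁻¹
        * (Real.exp (-(x.2 - ξ.2) ^ 2 / (2 * σ₂ ^ 2 * (t - τ)))
            - Real.exp (-(x.2 + ξ.2) ^ 2 / (2 * σ₂ ^ 2 * (t - τ)))))

/-- Specialization of `Mk` to the kernel's parameters. -/
noncomputable def MX (C₁ C₂ σ₁ σ₂ lam : ℝ) (ξ : ℝ × ℝ) (m₁ m₂ s y₁ y₂ : ℝ) : ℝ :=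
  Mk (-(lam + C₁ ^ 2 / (2 * σ₁ ^ 2) + C₂ ^ 2 / (2 * σ₂ ^ 2))) (C₁ / σ₁ ^ 2) (C₂ / σ₂ ^ 2)
    (2 * σ₁ ^ 2) (2 * σ₂ ^ 2) ξ.1 ξ.2 m₁ m₂ s y₁ y₂

lemma MX_y1 (C₁ C₂ σ₁ σ₂ lam : ℝ) (ξ : ℝ × ℝ) (m₁ m₂ s y₁ y₂ : ℝ) :
    HasDerivAt (fun y => MX C₁ C₂ σ₁ σ₂ lam ξ m₁ m₂ s y y₂)
      ((C₁ / σ₁ ^ 2 - 2 * (y₁ - m₁) / (2 * σ₁ ^ 2 * s)) * MX C₁ C₂ σ₁ σ₂ lam ξ m₁ m₂ s y₁ y₂)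
      y₁ :=
  Mk_y1 _ _ _ _ _ _ _ _ _ _ _ _

lemma MX_y2 (C₁ C₂ σ₁ σ₂ lam : ℝ) (ξ : ℝ × ℝ) (m₁ m₂ s y₁ y₂ : ℝ) :
    HasDerivAt (fun y => MX C₁ C₂ σ₁ σ₂ lam ξ m₁ m₂ s y₁ y)
      ((C₂ / σ₂ ^ 2 - 2 * (y₂ - m₂) / (2 * σ₂ ^ 2 * s)) * MX C₁ C₂ σ₁ σ₂ lam ξ m₁ m₂ s y₁ y₂)
      y₂ :=
  Mk_y2 _ _ _ _ _ _ _ _ _ _ _ _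

lemma MX_y1' (C₁ C₂ σ₁ σ₂ lam : ℝ) (ξ : ℝ × ℝ) (m₁ m₂ s y₁ y₂ : ℝ) :
    HasDerivAt
      (fun y => (C₁ / σ₁ ^ 2 - 2 * (y - m₁) / (2 * σ₁ ^ 2 * s))
        * MX C₁ C₂ σ₁ σ₂ lam ξ m₁ m₂ s y y₂)
      (((C₁ / σ₁ ^ 2 - 2 * (y₁ - m₁) / (2 * σ₁ ^ 2 * s)) ^ 2 - 2 / (2 * σ₁ ^ 2 * s))
        * MX C₁ C₂ σ₁ σ₂ lam ξ m₁ m₂ s y₁ y₂) y₁ :=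
  Mk_y1' _ _ _ _ _ _ _ _ _ _ _ _

lemma MX_y2' (C₁ C₂ σ₁ σ₂ lam : ℝ) (ξ : ℝ × ℝ) (m₁ m₂ s y₁ y₂ : ℝ) :
    HasDerivAt
      (fun y => (C₂ / σ₂ ^ 2 - 2 * (y - m₂) / (2 * σ₂ ^ 2 * s))
        * MX C₁ C₂ σ₁ σ₂ lam ξ m₁ m₂ s y₁ y)
      (((C₂ / σ₂ ^ 2 - 2 * (y₂ - m₂) / (2 * σ₂ ^ 2 * s)) ^ 2 - 2 / (2 * σ₂ ^ 2 * s))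
        * MX C₁ C₂ σ₁ σ₂ lam ξ m₁ m₂ s y₁ y₂) y₂ :=
  Mk_y2' _ _ _ _ _ _ _ _ _ _ _ _

lemma MX_t (C₁ C₂ σ₁ σ₂ lam : ℝ) (hσ₁ : 0 < σ₁) (hσ₂ : 0 < σ₂) (ξ : ℝ × ℝ)
    (m₁ m₂ : ℝ) (τ t y₁ y₂ : ℝ) (ht : τ < t) :
    HasDerivAt (fun u => MX C₁ C₂ σ₁ σ₂ lam ξ m₁ m₂ (u - τ) y₁ y₂)
      ((-(lam + C₁ ^ 2 / (2 * σ₁ ^ 2) + C₂ ^ 2 / (2 * σ₂ ^ 2)) - (t - τ)⁻¹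
          + (y₁ - m₁) ^ 2 / (2 * σ₁ ^ 2 * (t - τ) ^ 2)
          + (y₂ - m₂) ^ 2 / (2 * σ₂ ^ 2 * (t - τ) ^ 2))
        * MX C₁ C₂ σ₁ σ₂ lam ξ m₁ m₂ (t - τ) y₁ y₂) t :=
  Mk_t _ _ _ _ _ _ _ _ _ _ _ _ _ ht (by positivity) (by positivity)

lemma Kker_eq (C₁ C₂ σ₁ σ₂ lam : ℝ) (hσ₁ : 0 < σ₁) (hσ₂ : 0 < σ₂)
    (τ t : ℝ) (ht : τ < t) (ξ : ℝ × ℝ) (y₁ y₂ : ℝ) :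
    Kker C₁ C₂ σ₁ σ₂ lam t (y₁, y₂) τ ξ =
      (Real.sqrt (2 * Real.pi * σ₁ ^ 2))⁻¹ * (Real.sqrt (2 * Real.pi * σ₂ ^ 2))⁻¹ *
        (MX C₁ C₂ σ₁ σ₂ lam ξ ξ.1 ξ.2 (t - τ) y₁ y₂
          - MX C₁ C₂ σ₁ σ₂ lam ξ ξ.1 (-ξ.2) (t - τ) y₁ y₂
          - MX C₁ C₂ σ₁ σ₂ lam ξ (-ξ.1) ξ.2 (t - τ) y₁ y₂
          + MX C₁ C₂ σ₁ σ₂ lam ξ (-ξ.1) (-ξ.2) (t - τ) y₁ y₂) := by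
  have hs : (0:ℝ) < t - τ := sub_pos.2 ht
  have h1 : (0:ℝ) ≤ 2 * Real.pi * σ₁ ^ 2 := by positivity
  have h2 : (0:ℝ) ≤ 2 * Real.pi * σ₂ ^ 2 := by positivity
  unfold Kker MX Mk
  rw [Real.sqrt_mul h1 (t - τ), Real.sqrt_mul h2 (t - τ),
    show (y₁ - -ξ.1) = y₁ + ξ.1 by ring, show (y₂ - -ξ.2) = y₂ + ξ.2 by ring,
    show (t - τ)⁻¹ = (Real.sqrt (t - τ) * Real.sqrt (t - τ))⁻¹ by
      rw [Real.mul_self_sqrt hs.le],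
    mul_inv, mul_inv, mul_inv]
  ring

lemma Kker_eq' (C₁ C₂ σ₁ σ₂ lam : ℝ) (hσ₁ : 0 < σ₁) (hσ₂ : 0 < σ₂)
    (τ t : ℝ) (ht : τ < t) (ξ : ℝ × ℝ) (p : ℝ × ℝ) :
    Kker C₁ C₂ σ₁ σ₂ lam t p τ ξ =
      (Real.sqrt (2 * Real.pi * σ₁ ^ 2))⁻¹ * (Real.sqrt (2 * Real.pi * σ₂ ^ 2))⁻¹ *
        (MX C₁ C₂ σ₁ σ₂ lam ξ ξ.1 ξ.2 (t - τ) p.1 p.2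
          - MX C₁ C₂ σ₁ σ₂ lam ξ ξ.1 (-ξ.2) (t - τ) p.1 p.2
          - MX C₁ C₂ σ₁ σ₂ lam ξ (-ξ.1) ξ.2 (t - τ) p.1 p.2
          + MX C₁ C₂ σ₁ σ₂ lam ξ (-ξ.1) (-ξ.2) (t - τ) p.1 p.2) :=
  Kker_eq C₁ C₂ σ₁ σ₂ lam hσ₁ hσ₂ τ t ht ξ p.1 p.2

set_option maxHeartbeats 2000000 in
/-- For every fixed `τ` and `ξ`, the kernel `K` satisfies the adjoint PDE
`−∂K/∂t − C₁ ∂K/∂x₁ − C₂ ∂K/∂x₂ + ½(σ₁² ∂²K/∂x₁² + σ₂² ∂²K/∂x₂²) − λ K = 0`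
at every `(t,x)` with `t > τ`. -/
theorem kernel_satisfies_adjoint_pde
    (C₁ C₂ σ₁ σ₂ lam : ℝ) (hσ₁ : 0 < σ₁) (hσ₂ : 0 < σ₂) (hlam : 0 ≤ lam)
    (τ : ℝ) (ξ : ℝ × ℝ) (t : ℝ) (ht : τ < t) (x : ℝ × ℝ) :
    -(deriv (fun s : ℝ => Kker C₁ C₂ σ₁ σ₂ lam s x τ ξ) t)
      - C₁ * deriv (fun y : ℝ => Kker C₁ C₂ σ₁ σ₂ lam t (y, x.2) τ ξ) x.1
      - C₂ * deriv (fun y : ℝ => Kker C₁ C₂ σ₁ σ₂ lam t (x.1, y) τ ξ) x.2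
      + (1 / 2) * (σ₁ ^ 2 * deriv (deriv (fun y : ℝ => Kker C₁ C₂ σ₁ σ₂ lam t (y, x.2) τ ξ)) x.1
          + σ₂ ^ 2 * deriv (deriv (fun y : ℝ => Kker C₁ C₂ σ₁ σ₂ lam t (x.1, y) τ ξ)) x.2)
      - lam * Kker C₁ C₂ σ₁ σ₂ lam t x τ ξ = 0 := by
  have hs : (0:ℝ) < t - τ := sub_pos.2 ht
  have hsne : (t - τ) ≠ 0 := ne_of_gt hs
  -- rewrite the spatial slices
  rw [funext fun y => Kker_eq C₁ C₂ σ₁ σ₂ lam hσ₁ hσ₂ τ t ht ξ y x.2,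
      funext fun y => Kker_eq C₁ C₂ σ₁ σ₂ lam hσ₁ hσ₂ τ t ht ξ x.1 y,
      Kker_eq' C₁ C₂ σ₁ σ₂ lam hσ₁ hσ₂ τ t ht ξ x]
  set κ := (Real.sqrt (2 * Real.pi * σ₁ ^ 2))⁻¹ * (Real.sqrt (2 * Real.pi * σ₂ ^ 2))⁻¹ with hκ
  -- time derivative
  have hEv : (fun u : ℝ => Kker C₁ C₂ σ₁ σ₂ lam u x τ ξ) =ᶠ[nhds t]
      (fun u : ℝ => κ *
        (MX C₁ C₂ σ₁ σ₂ lam ξ ξ.1 ξ.2 (u - τ) x.1 x.2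
          - MX C₁ C₂ σ₁ σ₂ lam ξ ξ.1 (-ξ.2) (u - τ) x.1 x.2
          - MX C₁ C₂ σ₁ σ₂ lam ξ (-ξ.1) ξ.2 (u - τ) x.1 x.2
          + MX C₁ C₂ σ₁ σ₂ lam ξ (-ξ.1) (-ξ.2) (u - τ) x.1 x.2)) := by
    filter_upwards [Ioi_mem_nhds ht] with u hu
    exact Kker_eq' C₁ C₂ σ₁ σ₂ lam hσ₁ hσ₂ τ u hu ξ x
  rw [hEv.deriv_eq]
  have DT := ((((MX_t C₁ C₂ σ₁ σ₂ lam hσ₁ hσ₂ ξ ξ.1 ξ.2 τ t x.1 x.2 ht).sub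
      (MX_t C₁ C₂ σ₁ σ₂ lam hσ₁ hσ₂ ξ ξ.1 (-ξ.2) τ t x.1 x.2 ht)).sub
      (MX_t C₁ C₂ σ₁ σ₂ lam hσ₁ hσ₂ ξ (-ξ.1) ξ.2 τ t x.1 x.2 ht)).add
      (MX_t C₁ C₂ σ₁ σ₂ lam hσ₁ hσ₂ ξ (-ξ.1) (-ξ.2) τ t x.1 x.2 ht)).const_mul κ
  simp only [Pi.add_apply, Pi.sub_apply] at DT
  rw [DT.deriv]
  -- first x₁ derivative
  have D1 := ((((MX_y1 C₁ C₂ σ₁ σ₂ lam ξ ξ.1 ξ.2 (t - τ) x.1 x.2).sub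
      (MX_y1 C₁ C₂ σ₁ σ₂ lam ξ ξ.1 (-ξ.2) (t - τ) x.1 x.2)).sub
      (MX_y1 C₁ C₂ σ₁ σ₂ lam ξ (-ξ.1) ξ.2 (t - τ) x.1 x.2)).add
      (MX_y1 C₁ C₂ σ₁ σ₂ lam ξ (-ξ.1) (-ξ.2) (t - τ) x.1 x.2)).const_mul κ
  simp only [Pi.add_apply, Pi.sub_apply] at D1
  rw [D1.deriv]
  -- first x₂ derivative
  have D2 := ((((MX_y2 C₁ C₂ σ₁ σ₂ lam ξ ξ.1 ξ.2 (t - τ) x.1 x.2).sub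
      (MX_y2 C₁ C₂ σ₁ σ₂ lam ξ ξ.1 (-ξ.2) (t - τ) x.1 x.2)).sub
      (MX_y2 C₁ C₂ σ₁ σ₂ lam ξ (-ξ.1) ξ.2 (t - τ) x.1 x.2)).add
      (MX_y2 C₁ C₂ σ₁ σ₂ lam ξ (-ξ.1) (-ξ.2) (t - τ) x.1 x.2)).const_mul κ
  simp only [Pi.add_apply, Pi.sub_apply] at D2
  rw [D2.deriv]
  -- second x₁ derivative
  have E1 : deriv (fun y : ℝ => κ *
      (MX C₁ C₂ σ₁ σ₂ lam ξ ξ.1 ξ.2 (t - τ) y x.2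
        - MX C₁ C₂ σ₁ σ₂ lam ξ ξ.1 (-ξ.2) (t - τ) y x.2
        - MX C₁ C₂ σ₁ σ₂ lam ξ (-ξ.1) ξ.2 (t - τ) y x.2
        + MX C₁ C₂ σ₁ σ₂ lam ξ (-ξ.1) (-ξ.2) (t - τ) y x.2)) =
      fun y : ℝ => κ *
        ((C₁ / σ₁ ^ 2 - 2 * (y - ξ.1) / (2 * σ₁ ^ 2 * (t - τ)))
            * MX C₁ C₂ σ₁ σ₂ lam ξ ξ.1 ξ.2 (t - τ) y x.2
          - (C₁ / σ₁ ^ 2 - 2 * (y - ξ.1) / (2 * σ₁ ^ 2 * (t - τ)))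
            * MX C₁ C₂ σ₁ σ₂ lam ξ ξ.1 (-ξ.2) (t - τ) y x.2
          - (C₁ / σ₁ ^ 2 - 2 * (y - -ξ.1) / (2 * σ₁ ^ 2 * (t - τ)))
            * MX C₁ C₂ σ₁ σ₂ lam ξ (-ξ.1) ξ.2 (t - τ) y x.2
          + (C₁ / σ₁ ^ 2 - 2 * (y - -ξ.1) / (2 * σ₁ ^ 2 * (t - τ)))
            * MX C₁ C₂ σ₁ σ₂ lam ξ (-ξ.1) (-ξ.2) (t - τ) y x.2) := by
    funext y
    exact (((((MX_y1 C₁ C₂ σ₁ σ₂ lam ξ ξ.1 ξ.2 (t - τ) y x.2).sub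
      (MX_y1 C₁ C₂ σ₁ σ₂ lam ξ ξ.1 (-ξ.2) (t - τ) y x.2)).sub
      (MX_y1 C₁ C₂ σ₁ σ₂ lam ξ (-ξ.1) ξ.2 (t - τ) y x.2)).add
      (MX_y1 C₁ C₂ σ₁ σ₂ lam ξ (-ξ.1) (-ξ.2) (t - τ) y x.2)).const_mul κ).deriv
  rw [E1]
  have F1 := ((((MX_y1' C₁ C₂ σ₁ σ₂ lam ξ ξ.1 ξ.2 (t - τ) x.1 x.2).sub
      (MX_y1' C₁ C₂ σ₁ σ₂ lam ξ ξ.1 (-ξ.2) (t - τ) x.1 x.2)).sub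
      (MX_y1' C₁ C₂ σ₁ σ₂ lam ξ (-ξ.1) ξ.2 (t - τ) x.1 x.2)).add
      (MX_y1' C₁ C₂ σ₁ σ₂ lam ξ (-ξ.1) (-ξ.2) (t - τ) x.1 x.2)).const_mul κ
  simp only [Pi.add_apply, Pi.sub_apply] at F1
  rw [F1.deriv]
  -- second x₂ derivative
  have E2 : deriv (fun y : ℝ => κ *
      (MX C₁ C₂ σ₁ σ₂ lam ξ ξ.1 ξ.2 (t - τ) x.1 y
        - MX C₁ C₂ σ₁ σ₂ lam ξ ξ.1 (-ξ.2) (t - τ) x.1 y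
        - MX C₁ C₂ σ₁ σ₂ lam ξ (-ξ.1) ξ.2 (t - τ) x.1 y
        + MX C₁ C₂ σ₁ σ₂ lam ξ (-ξ.1) (-ξ.2) (t - τ) x.1 y)) =
      fun y : ℝ => κ *
        ((C₂ / σ₂ ^ 2 - 2 * (y - ξ.2) / (2 * σ₂ ^ 2 * (t - τ)))
            * MX C₁ C₂ σ₁ σ₂ lam ξ ξ.1 ξ.2 (t - τ) x.1 y
          - (C₂ / σ₂ ^ 2 - 2 * (y - -ξ.2) / (2 * σ₂ ^ 2 * (t - τ)))
            * MX C₁ C₂ σ₁ σ₂ lam ξ ξ.1 (-ξ.2) (t - τ) x.1 y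
          - (C₂ / σ₂ ^ 2 - 2 * (y - ξ.2) / (2 * σ₂ ^ 2 * (t - τ)))
            * MX C₁ C₂ σ₁ σ₂ lam ξ (-ξ.1) ξ.2 (t - τ) x.1 y
          + (C₂ / σ₂ ^ 2 - 2 * (y - -ξ.2) / (2 * σ₂ ^ 2 * (t - τ)))
            * MX C₁ C₂ σ₁ σ₂ lam ξ (-ξ.1) (-ξ.2) (t - τ) x.1 y) := by
    funext y
    exact (((((MX_y2 C₁ C₂ σ₁ σ₂ lam ξ ξ.1 ξ.2 (t - τ) x.1 y).sub
      (MX_y2 C₁ C₂ σ₁ σ₂ lam ξ ξ.1 (-ξ.2) (t - τ) x.1 y)).sub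
      (MX_y2 C₁ C₂ σ₁ σ₂ lam ξ (-ξ.1) ξ.2 (t - τ) x.1 y)).add
      (MX_y2 C₁ C₂ σ₁ σ₂ lam ξ (-ξ.1) (-ξ.2) (t - τ) x.1 y)).const_mul κ).deriv
  rw [E2]
  have F2 := ((((MX_y2' C₁ C₂ σ₁ σ₂ lam ξ ξ.1 ξ.2 (t - τ) x.1 x.2).sub
      (MX_y2' C₁ C₂ σ₁ σ₂ lam ξ ξ.1 (-ξ.2) (t - τ) x.1 x.2)).sub
      (MX_y2' C₁ C₂ σ₁ σ₂ lam ξ (-ξ.1) ξ.2 (t - τ) x.1 x.2)).add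
      (MX_y2' C₁ C₂ σ₁ σ₂ lam ξ (-ξ.1) (-ξ.2) (t - τ) x.1 x.2)).const_mul κ
  simp only [Pi.add_apply, Pi.sub_apply] at F2
  rw [F2.deriv]
  have hσ₁' : σ₁ ≠ 0 := ne_of_gt hσ₁
  have hσ₂' : σ₂ ≠ 0 := ne_of_gt hσ₂
  field_simp
  ring
end

section
/- The kernel K reproduces the Dirac initial condition in the weak sense: for every fixed τ ∈ ℝ, every point ξ = (ξ₁,ξ₂) with ξ₁ > 0 and ξ₂ > 0, and every bounded continuous function f : ℝ² → ℝ, the integral ∫_{[0,∞)×[0,∞)} K(t,x;τ,ξ) f(x) dx converges to f(ξ) as t → τ from the right. -/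
open Real MeasureTheory Filter
open scoped ENNReal

namespace KernelDiracAux

lemma prod_smul_smul {α β : Type*} [MeasurableSpace α] [MeasurableSpace β]
    (μ : Measure α) (ν : Measure β) [SFinite μ] [SFinite ν] (c d : ℝ≥0∞) :
    (c • μ).prod (d • ν) = (c * d) • (μ.prod ν) := by
  ext s hs
  rw [Measure.prod_apply hs, Measure.smul_apply, Measure.prod_apply hs,
    lintegral_smul_measure]
  simp only [Measure.smul_apply, smul_eq_mul]
  rw [lintegral_const_mul _ (measurable_measure_prodMk_left hs)]
  ring

lemma mp_affine (a b : ℝ) (ha : 0 < a) :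
    MeasurePreserving (fun y : ℝ => a * y + b) ((ENNReal.ofReal a) • volume) volume := by
  constructor
  · exact (measurable_id.const_mul a).add_const b
  · have h1 : (fun y : ℝ => a * y + b) = (fun y : ℝ => y + b) ∘ (fun y : ℝ => a * y) := rfl
    rw [Measure.map_smul, h1, ← Measure.map_map (measurable_add_const b) (measurable_const_mul a)]
    rw [show (fun y : ℝ => a * y) = (a * ·) from rfl, Real.map_volume_mul_left ha.ne']
    rw [Measure.map_smul, map_add_right_eq_self, smul_smul, ← ENNReal.ofReal_mul ha.le,
      abs_of_pos (inv_pos.2 ha), mul_inv_cancel₀ ha.ne', ENNReal.ofReal_one, one_smul]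

lemma integral_comp_affine₂ (a₁ a₂ b₁ b₂ : ℝ) (h₁ : 0 < a₁) (h₂ : 0 < a₂) (G : ℝ × ℝ → ℝ) :
    ∫ x, G x = (a₁ * a₂) * ∫ y : ℝ × ℝ, G (a₁ * y.1 + b₁, a₂ * y.2 + b₂) := by
  have mp : MeasurePreserving (Prod.map (fun y : ℝ => a₁ * y + b₁) (fun y : ℝ => a₂ * y + b₂))
      (((ENNReal.ofReal a₁) • volume).prod ((ENNReal.ofReal a₂) • volume))
      ((volume : Measure ℝ).prod volume) := (mp_affine a₁ b₁ h₁).prod (mp_affine a₂ b₂ h₂)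
  rw [prod_smul_smul] at mp
  have emb : MeasurableEmbedding (Prod.map (fun y : ℝ => a₁ * y + b₁) (fun y : ℝ => a₂ * y + b₂)) := by
    set e₁ : ℝ ≃ₜ ℝ := (Homeomorph.mulLeft₀ a₁ h₁.ne').trans (Homeomorph.addRight b₁) with he₁
    set e₂ : ℝ ≃ₜ ℝ := (Homeomorph.mulLeft₀ a₂ h₂.ne').trans (Homeomorph.addRight b₂) with he₂
    have hcoe : ⇑((e₁.prodCongr e₂).toMeasurableEquiv)
        = (Prod.map (fun y : ℝ => a₁ * y + b₁) (fun y : ℝ => a₂ * y + b₂)) := by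
      funext p; rfl
    exact hcoe ▸ ((e₁.prodCongr e₂).toMeasurableEquiv).measurableEmbedding
  have key := mp.integral_comp emb G
  rw [integral_smul_measure] at key
  rw [Measure.volume_eq_prod ℝ ℝ]
  rw [← key]
  rw [ENNReal.toReal_mul, ENNReal.toReal_ofReal h₁.le, ENNReal.toReal_ofReal h₂.le]
  rw [smul_eq_mul]
  congr 1

lemma integrable_exp_shift (k : ℝ) : Integrable (fun z : ℝ => Real.exp (k * z - z ^ 2 / 2)) := by
  have h : Integrable (fun z : ℝ => Real.exp (-(1/2 : ℝ) * (z - k) ^ 2)) :=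
    (integrable_exp_neg_mul_sq (by norm_num : (0:ℝ) < 1/2)).comp_sub_right k
  have := h.const_mul (Real.exp (k ^ 2 / 2))
  refine this.congr ?_
  filter_upwards with z
  rw [← Real.exp_add]
  congr 1
  ring

lemma integrable_exp_abs_quad (k : ℝ) :
    Integrable (fun z : ℝ => Real.exp (k * |z| - z ^ 2 / 2)) := by
  have hmeas : AEStronglyMeasurable (fun z : ℝ => Real.exp (k * |z| - z ^ 2 / 2)) volume :=
    (Real.continuous_exp.comp ((continuous_const.mul continuous_abs).sub
      (continuous_pow 2 |>.div_const 2))).aestronglyMeasurable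
  refine Integrable.mono' ((integrable_exp_shift k).add (integrable_exp_shift (-k))) hmeas ?_
  filter_upwards with z
  rw [Real.norm_eq_abs, abs_of_nonneg (Real.exp_pos _).le]
  simp only [Pi.add_apply]
  rcases abs_cases z with ⟨h1, _⟩ | ⟨h1, _⟩
  · rw [h1]
    linarith [Real.exp_pos (-k * z - z ^ 2 / 2)]
  · rw [h1]
    have h2 : k * -z - z ^ 2 / 2 = -k * z - z ^ 2 / 2 := by ring
    rw [h2]
    linarith [Real.exp_pos (k * z - z ^ 2 / 2)]

lemma key_formula (C₁ C₂ σ₁ σ₂ lam : ℝ) (hσ₁ : 0 < σ₁) (hσ₂ : 0 < σ₂)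
    (τ t : ℝ) (ht : τ < t) (ξ y : ℝ × ℝ) :
    (σ₁ * Real.sqrt (t - τ)) * (σ₂ * Real.sqrt (t - τ)) *
      Kker C₁ C₂ σ₁ σ₂ lam t
        (σ₁ * Real.sqrt (t - τ) * y.1 + ξ.1, σ₂ * Real.sqrt (t - τ) * y.2 + ξ.2) τ ξ
    = (2 * π)⁻¹ *
      Real.exp ((-(lam + C₁ ^ 2 / (2 * σ₁ ^ 2) + C₂ ^ 2 / (2 * σ₂ ^ 2))) * (t - τ)
        + (C₁ / σ₁) * (Real.sqrt (t - τ) * y.1) + (C₂ / σ₂) * (Real.sqrt (t - τ) * y.2))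
      * ((Real.exp (-(y.1 ^ 2) / 2)
           - Real.exp (-(σ₁ * Real.sqrt (t - τ) * y.1 + 2 * ξ.1) ^ 2 / (2 * σ₁ ^ 2 * (t - τ))))
        * (Real.exp (-(y.2 ^ 2) / 2)
           - Real.exp (-(σ₂ * Real.sqrt (t - τ) * y.2 + 2 * ξ.2) ^ 2 / (2 * σ₂ ^ 2 * (t - τ))))) := by
  have hs : 0 < t - τ := sub_pos.2 ht
  have hsq : 0 < Real.sqrt (t - τ) := Real.sqrt_pos.2 hs
  have hss : (Real.sqrt (t - τ)) ^ 2 = t - τ := Real.sq_sqrt hs.le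
  have hroot₁ : Real.sqrt (2 * π * σ₁ ^ 2 * (t - τ)) = Real.sqrt (2 * π) * (σ₁ * Real.sqrt (t - τ)) := by
    rw [show 2 * π * σ₁ ^ 2 * (t - τ) = (2 * π) * (σ₁ * Real.sqrt (t - τ)) ^ 2 by
      rw [mul_pow, hss]; ring]
    rw [Real.sqrt_mul (by positivity), Real.sqrt_sq (by positivity)]
  have hroot₂ : Real.sqrt (2 * π * σ₂ ^ 2 * (t - τ)) = Real.sqrt (2 * π) * (σ₂ * Real.sqrt (t - τ)) := by
    rw [show 2 * π * σ₂ ^ 2 * (t - τ) = (2 * π) * (σ₂ * Real.sqrt (t - τ)) ^ 2 by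
      rw [mul_pow, hss]; ring]
    rw [Real.sqrt_mul (by positivity), Real.sqrt_sq (by positivity)]
  simp only [Kker]
  rw [hroot₁, hroot₂]
  have eA : (-(lam + C₁ ^ 2 / (2 * σ₁ ^ 2) + C₂ ^ 2 / (2 * σ₂ ^ 2))) * (t - τ)
      + (C₁ / σ₁ ^ 2) * ((σ₁ * Real.sqrt (t - τ) * y.1 + ξ.1) - ξ.1)
      + (C₂ / σ₂ ^ 2) * ((σ₂ * Real.sqrt (t - τ) * y.2 + ξ.2) - ξ.2)
      = (-(lam + C₁ ^ 2 / (2 * σ₁ ^ 2) + C₂ ^ 2 / (2 * σ₂ ^ 2))) * (t - τ)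
        + (C₁ / σ₁) * (Real.sqrt (t - τ) * y.1) + (C₂ / σ₂) * (Real.sqrt (t - τ) * y.2) := by
    field_simp
    ring
  have eB₁ : -((σ₁ * Real.sqrt (t - τ) * y.1 + ξ.1) - ξ.1) ^ 2 / (2 * σ₁ ^ 2 * (t - τ))
      = -(y.1 ^ 2) / 2 := by
    rw [show (σ₁ * Real.sqrt (t - τ) * y.1 + ξ.1) - ξ.1 = σ₁ * Real.sqrt (t - τ) * y.1 by ring]
    rw [show (σ₁ * Real.sqrt (t - τ) * y.1) ^ 2 = σ₁ ^ 2 * (t - τ) * y.1 ^ 2 by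
      rw [mul_pow, mul_pow, hss]]
    field_simp
  have eB₂ : -((σ₂ * Real.sqrt (t - τ) * y.2 + ξ.2) - ξ.2) ^ 2 / (2 * σ₂ ^ 2 * (t - τ))
      = -(y.2 ^ 2) / 2 := by
    rw [show (σ₂ * Real.sqrt (t - τ) * y.2 + ξ.2) - ξ.2 = σ₂ * Real.sqrt (t - τ) * y.2 by ring]
    rw [show (σ₂ * Real.sqrt (t - τ) * y.2) ^ 2 = σ₂ ^ 2 * (t - τ) * y.2 ^ 2 by
      rw [mul_pow, mul_pow, hss]]
    field_simp
  have eC₁ : (σ₁ * Real.sqrt (t - τ) * y.1 + ξ.1) + ξ.1 = σ₁ * Real.sqrt (t - τ) * y.1 + 2 * ξ.1 := by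
    ring
  have eC₂ : (σ₂ * Real.sqrt (t - τ) * y.2 + ξ.2) + ξ.2 = σ₂ * Real.sqrt (t - τ) * y.2 + 2 * ξ.2 := by
    ring
  rw [eA, eB₁, eB₂, eC₁, eC₂]
  have h2π : Real.sqrt (2 * π) * Real.sqrt (2 * π) = 2 * π := Real.mul_self_sqrt (by positivity)
  have h1 : σ₁ * Real.sqrt (t - τ) ≠ 0 := by positivity
  have h2 : σ₂ * Real.sqrt (t - τ) ≠ 0 := by positivity
  have halg : ∀ E P₁ P₂ : ℝ,
      (σ₁ * Real.sqrt (t - τ)) * (σ₂ * Real.sqrt (t - τ)) *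
        (E * ((Real.sqrt (2 * π) * (σ₁ * Real.sqrt (t - τ)))⁻¹ * P₁)
          * ((Real.sqrt (2 * π) * (σ₂ * Real.sqrt (t - τ)))⁻¹ * P₂))
      = (2 * π)⁻¹ * E * (P₁ * P₂) := by
    intro E P₁ P₂
    field_simp
    ring_nf
    rw [Real.sq_sqrt (by positivity)]
    ring
  exact halg _ _ _

noncomputable def F (C₁ C₂ σ₁ σ₂ lam τ : ℝ) (ξ : ℝ × ℝ) (f : ℝ × ℝ → ℝ) (t : ℝ) (y : ℝ × ℝ) : ℝ :=
  (σ₁ * Real.sqrt (t - τ)) * (σ₂ * Real.sqrt (t - τ)) *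
    (Set.Ici (0:ℝ) ×ˢ Set.Ici (0:ℝ)).indicator (fun x => Kker C₁ C₂ σ₁ σ₂ lam t x τ ξ * f x)
      (σ₁ * Real.sqrt (t - τ) * y.1 + ξ.1, σ₂ * Real.sqrt (t - τ) * y.2 + ξ.2)

lemma eqA (C₁ C₂ σ₁ σ₂ lam τ : ℝ) (hσ₁ : 0 < σ₁) (hσ₂ : 0 < σ₂) (ξ : ℝ × ℝ) (f : ℝ × ℝ → ℝ)
    (t : ℝ) (ht : τ < t) :
    (∫ x in Set.Ici (0 : ℝ) ×ˢ Set.Ici (0 : ℝ), Kker C₁ C₂ σ₁ σ₂ lam t x τ ξ * f x)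
      = ∫ y, F C₁ C₂ σ₁ σ₂ lam τ ξ f t y := by
  have hQm : MeasurableSet (Set.Ici (0:ℝ) ×ˢ Set.Ici (0:ℝ)) :=
    measurableSet_Ici.prod measurableSet_Ici
  have hs : 0 < t - τ := sub_pos.2 ht
  have ha₁ : 0 < σ₁ * Real.sqrt (t - τ) := by positivity
  have ha₂ : 0 < σ₂ * Real.sqrt (t - τ) := by positivity
  rw [← integral_indicator hQm]
  rw [integral_comp_affine₂ _ _ ξ.1 ξ.2 ha₁ ha₂
    ((Set.Ici (0:ℝ) ×ˢ Set.Ici (0:ℝ)).indicator (fun x => Kker C₁ C₂ σ₁ σ₂ lam t x τ ξ * f x))]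
  rw [← integral_const_mul]
  rfl

lemma intL (f : ℝ × ℝ → ℝ) (ξ : ℝ × ℝ) :
    (∫ y : ℝ × ℝ, (2 * π)⁻¹ * (Real.exp (-(y.1 ^ 2) / 2) * Real.exp (-(y.2 ^ 2) / 2)) * f ξ)
      = f ξ := by
  have h1 : (fun y : ℝ × ℝ => (2 * π)⁻¹ * (Real.exp (-(y.1 ^ 2) / 2) * Real.exp (-(y.2 ^ 2) / 2)) * f ξ)
      = fun y : ℝ × ℝ => ((2 * π)⁻¹ * f ξ * Real.exp (-(y.1 ^ 2) / 2)) * Real.exp (-(y.2 ^ 2) / 2) := by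
    funext y; ring
  rw [h1, Measure.volume_eq_prod, integral_prod_mul
    (fun z : ℝ => (2 * π)⁻¹ * f ξ * Real.exp (-(z ^ 2) / 2)) (fun z : ℝ => Real.exp (-(z ^ 2) / 2))]
  rw [integral_const_mul]
  have hg : (∫ z : ℝ, Real.exp (-(z ^ 2) / 2)) = Real.sqrt (2 * π) := by
    rw [show (fun z : ℝ => Real.exp (-(z ^ 2) / 2)) = fun z : ℝ => Real.exp (-(1/2 : ℝ) * z ^ 2) by
      funext z; ring_nf]
    rw [integral_gaussian (1/2 : ℝ)]
    congr 1
    ring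
  rw [hg, mul_assoc ((2 * π)⁻¹ * f ξ), Real.mul_self_sqrt (by positivity)]
  have h2 : (2 : ℝ) * π ≠ 0 := by positivity
  field_simp

lemma measF (C₁ C₂ σ₁ σ₂ lam τ : ℝ) (ξ : ℝ × ℝ) (f : ℝ × ℝ → ℝ) (hf : Continuous f) (t : ℝ) :
    AEStronglyMeasurable (F C₁ C₂ σ₁ σ₂ lam τ ξ f t) volume := by
  have hKc : Continuous (fun x : ℝ × ℝ => Kker C₁ C₂ σ₁ σ₂ lam t x τ ξ * f x) := by
    apply Continuous.mul _ hf
    unfold Kker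
    fun_prop
  have hQm : MeasurableSet (Set.Ici (0:ℝ) ×ˢ Set.Ici (0:ℝ)) :=
    measurableSet_Ici.prod measurableSet_Ici
  have hsm := hKc.stronglyMeasurable.indicator hQm
  have hT : Measurable (fun y : ℝ × ℝ =>
      ((σ₁ * Real.sqrt (t - τ) * y.1 + ξ.1, σ₂ * Real.sqrt (t - τ) * y.2 + ξ.2) : ℝ × ℝ)) := by
    fun_prop
  exact ((hsm.comp_measurable hT).aestronglyMeasurable).const_mul _

lemma limF (C₁ C₂ σ₁ σ₂ lam τ : ℝ) (hσ₁ : 0 < σ₁) (hσ₂ : 0 < σ₂) (ξ : ℝ × ℝ)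
    (hξ₁ : 0 < ξ.1) (hξ₂ : 0 < ξ.2) (f : ℝ × ℝ → ℝ) (hf : Continuous f) (y : ℝ × ℝ) :
    Tendsto (fun t => F C₁ C₂ σ₁ σ₂ lam τ ξ f t y) (nhdsWithin τ (Set.Ioi τ))
      (nhds ((2 * π)⁻¹ * (Real.exp (-(y.1 ^ 2) / 2) * Real.exp (-(y.2 ^ 2) / 2)) * f ξ)) := by
  set l := nhdsWithin τ (Set.Ioi τ) with hl
  have hs0 : Tendsto (fun t : ℝ => t - τ) l (nhds 0) := by
    have h : Tendsto (fun t : ℝ => t - τ) (nhds τ) (nhds (τ - τ)) := tendsto_id.sub_const τ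
    rw [sub_self] at h
    exact h.mono_left nhdsWithin_le_nhds
  have hsq0 : Tendsto (fun t : ℝ => Real.sqrt (t - τ)) l (nhds 0) := by
    have h := (Real.continuous_sqrt.tendsto 0).comp hs0
    rwa [Real.sqrt_zero] at h
  have hpos : ∀ᶠ t in l, 0 < t - τ := by
    filter_upwards [self_mem_nhdsWithin] with t ht
    exact sub_pos.2 ht
  have htr₁ : Tendsto (fun t : ℝ => σ₁ * Real.sqrt (t - τ) * y.1) l (nhds 0) := by
    have h := (hsq0.const_mul σ₁).mul_const y.1
    rwa [mul_zero, zero_mul] at h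
  have htr₂ : Tendsto (fun t : ℝ => σ₂ * Real.sqrt (t - τ) * y.2) l (nhds 0) := by
    have h := (hsq0.const_mul σ₂).mul_const y.2
    rwa [mul_zero, zero_mul] at h
  have hev₁ : ∀ᶠ t in l, 0 ≤ σ₁ * Real.sqrt (t - τ) * y.1 + ξ.1 := by
    filter_upwards [htr₁.eventually (eventually_gt_nhds (by linarith : -ξ.1 < (0:ℝ)))] with t ht
    linarith
  have hev₂ : ∀ᶠ t in l, 0 ≤ σ₂ * Real.sqrt (t - τ) * y.2 + ξ.2 := by
    filter_upwards [htr₂.eventually (eventually_gt_nhds (by linarith : -ξ.2 < (0:ℝ)))] with t ht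
    linarith
  have hE : Tendsto (fun t => Real.exp ((-(lam + C₁ ^ 2 / (2 * σ₁ ^ 2) + C₂ ^ 2 / (2 * σ₂ ^ 2))) * (t - τ)
      + (C₁ / σ₁) * (Real.sqrt (t - τ) * y.1) + (C₂ / σ₂) * (Real.sqrt (t - τ) * y.2))) l (nhds 1) := by
    have h1 : Tendsto (fun t : ℝ => (-(lam + C₁ ^ 2 / (2 * σ₁ ^ 2) + C₂ ^ 2 / (2 * σ₂ ^ 2))) * (t - τ)) l (nhds 0) := by
      have h := hs0.const_mul (-(lam + C₁ ^ 2 / (2 * σ₁ ^ 2) + C₂ ^ 2 / (2 * σ₂ ^ 2)))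
      rwa [mul_zero] at h
    have h2 : Tendsto (fun t : ℝ => (C₁ / σ₁) * (Real.sqrt (t - τ) * y.1)) l (nhds 0) := by
      have h := (hsq0.mul_const y.1).const_mul (C₁ / σ₁)
      rwa [zero_mul, mul_zero] at h
    have h3 : Tendsto (fun t : ℝ => (C₂ / σ₂) * (Real.sqrt (t - τ) * y.2)) l (nhds 0) := by
      have h := (hsq0.mul_const y.2).const_mul (C₂ / σ₂)
      rwa [zero_mul, mul_zero] at h
    have h := (h1.add h2).add h3
    simp only [add_zero] at h
    have h' := (Real.continuous_exp.tendsto 0).comp h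
    rwa [Real.exp_zero] at h'
  have hr : ∀ σ : ℝ, 0 < σ → ∀ c z : ℝ, 0 < c →
      Tendsto (fun t => Real.exp (-(σ * Real.sqrt (t - τ) * z + 2 * c) ^ 2 / (2 * σ ^ 2 * (t - τ)))) l (nhds 0) := by
    intro σ hσ c z hc
    have htr : Tendsto (fun t : ℝ => σ * Real.sqrt (t - τ) * z) l (nhds 0) := by
      have h := (hsq0.const_mul σ).mul_const z
      rwa [mul_zero, zero_mul] at h
    have hnum : Tendsto (fun t : ℝ => (σ * Real.sqrt (t - τ) * z + 2 * c) ^ 2) l (nhds ((2 * c) ^ 2)) := by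
      have h := (htr.add_const (2 * c)).pow 2
      rwa [zero_add] at h
    have hden : Tendsto (fun t : ℝ => 2 * σ ^ 2 * (t - τ)) l (nhdsWithin 0 (Set.Ioi 0)) := by
      rw [tendsto_nhdsWithin_iff]
      constructor
      · have h := hs0.const_mul (2 * σ ^ 2)
        rwa [mul_zero] at h
      · filter_upwards [hpos] with t ht
        have h : (0:ℝ) < 2 * σ ^ 2 * (t - τ) := by positivity
        exact h
    have hinv : Tendsto (fun t : ℝ => (2 * σ ^ 2 * (t - τ))⁻¹) l atTop :=
      tendsto_inv_nhdsGT_zero.comp hden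
    have hmul : Tendsto (fun t : ℝ => (σ * Real.sqrt (t - τ) * z + 2 * c) ^ 2 * (2 * σ ^ 2 * (t - τ))⁻¹) l atTop :=
      hnum.pos_mul_atTop (by positivity) hinv
    have hneg : Tendsto (fun t : ℝ => -((σ * Real.sqrt (t - τ) * z + 2 * c) ^ 2 * (2 * σ ^ 2 * (t - τ))⁻¹)) l atBot :=
      tendsto_neg_atTop_atBot.comp hmul
    have hexp := Real.tendsto_exp_atBot.comp hneg
    refine hexp.congr fun t => ?_
    simp only [Function.comp]
    rw [neg_div, div_eq_mul_inv]
  have hr₁ := hr σ₁ hσ₁ ξ.1 y.1 hξ₁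
  have hr₂ := hr σ₂ hσ₂ ξ.2 y.2 hξ₂
  have hT : Tendsto (fun t => ((σ₁ * Real.sqrt (t - τ) * y.1 + ξ.1,
      σ₂ * Real.sqrt (t - τ) * y.2 + ξ.2) : ℝ × ℝ)) l (nhds ξ) := by
    have h1 : Tendsto (fun t => σ₁ * Real.sqrt (t - τ) * y.1 + ξ.1) l (nhds ξ.1) := by
      have h := htr₁.add_const ξ.1
      rwa [zero_add] at h
    have h2 : Tendsto (fun t => σ₂ * Real.sqrt (t - τ) * y.2 + ξ.2) l (nhds ξ.2) := by
      have h := htr₂.add_const ξ.2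
      rwa [zero_add] at h
    have h := h1.prodMk_nhds h2
    rwa [Prod.mk.eta] at h
  have hfT : Tendsto (fun t => f ((σ₁ * Real.sqrt (t - τ) * y.1 + ξ.1,
      σ₂ * Real.sqrt (t - τ) * y.2 + ξ.2) : ℝ × ℝ)) l (nhds (f ξ)) := (hf.tendsto ξ).comp hT
  have hmain : Tendsto (fun t => (2 * π)⁻¹ *
      Real.exp ((-(lam + C₁ ^ 2 / (2 * σ₁ ^ 2) + C₂ ^ 2 / (2 * σ₂ ^ 2))) * (t - τ)
        + (C₁ / σ₁) * (Real.sqrt (t - τ) * y.1) + (C₂ / σ₂) * (Real.sqrt (t - τ) * y.2))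
      * ((Real.exp (-(y.1 ^ 2) / 2)
           - Real.exp (-(σ₁ * Real.sqrt (t - τ) * y.1 + 2 * ξ.1) ^ 2 / (2 * σ₁ ^ 2 * (t - τ))))
        * (Real.exp (-(y.2 ^ 2) / 2)
           - Real.exp (-(σ₂ * Real.sqrt (t - τ) * y.2 + 2 * ξ.2) ^ 2 / (2 * σ₂ ^ 2 * (t - τ)))))
      * f ((σ₁ * Real.sqrt (t - τ) * y.1 + ξ.1, σ₂ * Real.sqrt (t - τ) * y.2 + ξ.2) : ℝ × ℝ)) l
      (nhds ((2 * π)⁻¹ * 1 * ((Real.exp (-(y.1 ^ 2) / 2) - 0) * (Real.exp (-(y.2 ^ 2) / 2) - 0)) * f ξ)) :=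
    ((tendsto_const_nhds.mul hE).mul
      ((tendsto_const_nhds.sub hr₁).mul (tendsto_const_nhds.sub hr₂))).mul hfT
  rw [mul_one, sub_zero, sub_zero] at hmain
  refine Tendsto.congr' ?_ hmain
  filter_upwards [hev₁, hev₂, self_mem_nhdsWithin] with t h1 h2 hmem
  have hmemQ : ((σ₁ * Real.sqrt (t - τ) * y.1 + ξ.1, σ₂ * Real.sqrt (t - τ) * y.2 + ξ.2) : ℝ × ℝ)
      ∈ Set.Ici (0:ℝ) ×ˢ Set.Ici (0:ℝ) := ⟨h1, h2⟩
  have ht : τ < t := hmem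
  rw [← key_formula C₁ C₂ σ₁ σ₂ lam hσ₁ hσ₂ τ t ht ξ y]
  unfold F
  rw [Set.indicator_of_mem hmemQ]
  ring

lemma gauss_diff_abs_le (σ s c z : ℝ) (hσ : 0 < σ) (hs : 0 < s) (hc : 0 < c)
    (h : 0 ≤ σ * Real.sqrt s * z + c) :
    |Real.exp (-(z ^ 2) / 2) - Real.exp (-(σ * Real.sqrt s * z + 2 * c) ^ 2 / (2 * σ ^ 2 * s))|
      ≤ Real.exp (-(z ^ 2) / 2) := by
  have hu2 : (σ * Real.sqrt s * z) ^ 2 = σ ^ 2 * s * z ^ 2 := by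
    rw [mul_pow, mul_pow, Real.sq_sqrt hs.le]
  have h4 : (σ * Real.sqrt s * z) ^ 2 ≤ (σ * Real.sqrt s * z + 2 * c) ^ 2 := by
    nlinarith [mul_nonneg hc.le h]
  have h5 : z ^ 2 / 2 ≤ (σ * Real.sqrt s * z + 2 * c) ^ 2 / (2 * σ ^ 2 * s) := by
    rw [div_le_div_iff₀ (by norm_num) (by positivity)]
    nlinarith [h4, hu2]
  have hBle : -(σ * Real.sqrt s * z + 2 * c) ^ 2 / (2 * σ ^ 2 * s) ≤ -(z ^ 2) / 2 := by
    rw [neg_div, neg_div]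
    linarith
  have hrle := Real.exp_le_exp.2 hBle
  have hrpos := (Real.exp_pos (-(σ * Real.sqrt s * z + 2 * c) ^ 2 / (2 * σ ^ 2 * s))).le
  have hepos := (Real.exp_pos (-(z ^ 2) / 2)).le
  rw [abs_le]
  constructor <;> linarith

set_option maxHeartbeats 1000000 in
lemma boundF (C₁ C₂ σ₁ σ₂ lam τ : ℝ) (hσ₁ : 0 < σ₁) (hσ₂ : 0 < σ₂) (hlam : 0 ≤ lam)
    (ξ : ℝ × ℝ) (hξ₁ : 0 < ξ.1) (hξ₂ : 0 < ξ.2) (f : ℝ × ℝ → ℝ) (M : ℝ) (hM : ∀ x, |f x| ≤ M)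
    (t : ℝ) (ht : τ < t) (ht1 : t < τ + 1) (y : ℝ × ℝ) :
    ‖F C₁ C₂ σ₁ σ₂ lam τ ξ f t y‖ ≤
      (M * (2 * π)⁻¹) * (Real.exp (|C₁| / σ₁ * |y.1| - y.1 ^ 2 / 2)
        * Real.exp (|C₂| / σ₂ * |y.2| - y.2 ^ 2 / 2)) := by
  have hM0 : 0 ≤ M := le_trans (abs_nonneg _) (hM ξ)
  have hs : 0 < t - τ := sub_pos.2 ht
  have hsq : (0:ℝ) ≤ Real.sqrt (t - τ) := Real.sqrt_nonneg _
  have hsq1 : Real.sqrt (t - τ) ≤ 1 := by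
    rw [show (1:ℝ) = Real.sqrt 1 by rw [Real.sqrt_one]]
    exact Real.sqrt_le_sqrt (by linarith)
  by_cases hmem : ((σ₁ * Real.sqrt (t - τ) * y.1 + ξ.1, σ₂ * Real.sqrt (t - τ) * y.2 + ξ.2) : ℝ × ℝ)
      ∈ Set.Ici (0:ℝ) ×ˢ Set.Ici (0:ℝ)
  case neg =>
    unfold F
    rw [Set.indicator_of_notMem hmem, mul_zero, norm_zero]
    positivity
  case pos =>
    have h1 : (0:ℝ) ≤ σ₁ * Real.sqrt (t - τ) * y.1 + ξ.1 := hmem.1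
    have h2 : (0:ℝ) ≤ σ₂ * Real.sqrt (t - τ) * y.2 + ξ.2 := hmem.2
    unfold F
    rw [Set.indicator_of_mem hmem, ← mul_assoc,
      key_formula C₁ C₂ σ₁ σ₂ lam hσ₁ hσ₂ τ t ht ξ y, Real.norm_eq_abs]
    simp only [abs_mul]
    rw [abs_of_nonneg (by positivity : (0:ℝ) ≤ (2 * π)⁻¹),
      abs_of_nonneg (Real.exp_pos _).le]
    -- bound on the drift exponential
    have e1 : (C₁ / σ₁) * (Real.sqrt (t - τ) * y.1) ≤ |C₁| / σ₁ * |y.1| := by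
      have ha := le_abs_self ((C₁ / σ₁) * (Real.sqrt (t - τ) * y.1))
      have hb : |(C₁ / σ₁) * (Real.sqrt (t - τ) * y.1)|
          = |C₁| / σ₁ * (Real.sqrt (t - τ) * |y.1|) := by
        rw [abs_mul, abs_div, abs_of_pos hσ₁, abs_mul, abs_of_nonneg hsq]
      have hc : |C₁| / σ₁ * (Real.sqrt (t - τ) * |y.1|) ≤ |C₁| / σ₁ * |y.1| := by
        apply mul_le_mul_of_nonneg_left _ (by positivity)
        nlinarith [abs_nonneg y.1]
      linarith
    have e2 : (C₂ / σ₂) * (Real.sqrt (t - τ) * y.2) ≤ |C₂| / σ₂ * |y.2| := by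
      have ha := le_abs_self ((C₂ / σ₂) * (Real.sqrt (t - τ) * y.2))
      have hb : |(C₂ / σ₂) * (Real.sqrt (t - τ) * y.2)|
          = |C₂| / σ₂ * (Real.sqrt (t - τ) * |y.2|) := by
        rw [abs_mul, abs_div, abs_of_pos hσ₂, abs_mul, abs_of_nonneg hsq]
      have hc : |C₂| / σ₂ * (Real.sqrt (t - τ) * |y.2|) ≤ |C₂| / σ₂ * |y.2| := by
        apply mul_le_mul_of_nonneg_left _ (by positivity)
        nlinarith [abs_nonneg y.2]
      linarith
    have e0 : (-(lam + C₁ ^ 2 / (2 * σ₁ ^ 2) + C₂ ^ 2 / (2 * σ₂ ^ 2))) * (t - τ) ≤ 0 := by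
      apply mul_nonpos_of_nonpos_of_nonneg _ hs.le
      have hpos0 : (0:ℝ) ≤ lam + C₁ ^ 2 / (2 * σ₁ ^ 2) + C₂ ^ 2 / (2 * σ₂ ^ 2) := by positivity
      linarith
    have keyE : Real.exp ((-(lam + C₁ ^ 2 / (2 * σ₁ ^ 2) + C₂ ^ 2 / (2 * σ₂ ^ 2))) * (t - τ)
        + (C₁ / σ₁) * (Real.sqrt (t - τ) * y.1) + (C₂ / σ₂) * (Real.sqrt (t - τ) * y.2))
        ≤ Real.exp (|C₁| / σ₁ * |y.1| + |C₂| / σ₂ * |y.2|) :=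
      Real.exp_le_exp.2 (by linarith)
    -- bounds on the two gaussian differences
    have key₁ : |Real.exp (-(y.1 ^ 2) / 2)
        - Real.exp (-(σ₁ * Real.sqrt (t - τ) * y.1 + 2 * ξ.1) ^ 2 / (2 * σ₁ ^ 2 * (t - τ)))|
        ≤ Real.exp (-(y.1 ^ 2) / 2) :=
      gauss_diff_abs_le σ₁ (t - τ) ξ.1 y.1 hσ₁ hs hξ₁ h1
    have key₂ : |Real.exp (-(y.2 ^ 2) / 2)
        - Real.exp (-(σ₂ * Real.sqrt (t - τ) * y.2 + 2 * ξ.2) ^ 2 / (2 * σ₂ ^ 2 * (t - τ)))|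
        ≤ Real.exp (-(y.2 ^ 2) / 2) :=
      gauss_diff_abs_le σ₂ (t - τ) ξ.2 y.2 hσ₂ hs hξ₂ h2
    have keyf := hM ((σ₁ * Real.sqrt (t - τ) * y.1 + ξ.1, σ₂ * Real.sqrt (t - τ) * y.2 + ξ.2) : ℝ × ℝ)
    have hcomb : Real.exp (|C₁| / σ₁ * |y.1| + |C₂| / σ₂ * |y.2|)
        * (Real.exp (-(y.1 ^ 2) / 2) * Real.exp (-(y.2 ^ 2) / 2))
        = Real.exp (|C₁| / σ₁ * |y.1| - y.1 ^ 2 / 2) * Real.exp (|C₂| / σ₂ * |y.2| - y.2 ^ 2 / 2) := by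
      rw [← Real.exp_add, ← Real.exp_add, ← Real.exp_add]
      congr 1
      ring
    calc (2 * π)⁻¹ * Real.exp ((-(lam + C₁ ^ 2 / (2 * σ₁ ^ 2) + C₂ ^ 2 / (2 * σ₂ ^ 2))) * (t - τ)
          + (C₁ / σ₁) * (Real.sqrt (t - τ) * y.1) + (C₂ / σ₂) * (Real.sqrt (t - τ) * y.2))
          * (|Real.exp (-(y.1 ^ 2) / 2)
              - Real.exp (-(σ₁ * Real.sqrt (t - τ) * y.1 + 2 * ξ.1) ^ 2 / (2 * σ₁ ^ 2 * (t - τ)))|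
            * |Real.exp (-(y.2 ^ 2) / 2)
              - Real.exp (-(σ₂ * Real.sqrt (t - τ) * y.2 + 2 * ξ.2) ^ 2 / (2 * σ₂ ^ 2 * (t - τ)))|)
          * |f ((σ₁ * Real.sqrt (t - τ) * y.1 + ξ.1, σ₂ * Real.sqrt (t - τ) * y.2 + ξ.2) : ℝ × ℝ)|
        ≤ (2 * π)⁻¹ * Real.exp (|C₁| / σ₁ * |y.1| + |C₂| / σ₂ * |y.2|)
          * (Real.exp (-(y.1 ^ 2) / 2) * Real.exp (-(y.2 ^ 2) / 2)) * M := by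
          gcongr
      _ = (M * (2 * π)⁻¹) * (Real.exp (|C₁| / σ₁ * |y.1| - y.1 ^ 2 / 2)
          * Real.exp (|C₂| / σ₂ * |y.2| - y.2 ^ 2 / 2)) := by
          rw [← hcomb]
          ring

end KernelDiracAux

/-- The kernel `K` reproduces the Dirac initial condition in the weak sense: for fixed `τ`,
`ξ` interior to the positive quadrant and any bounded continuous `f : ℝ² → ℝ`,
`∫_{[0,∞)²} K(t,x;τ,ξ) f(x) dx → f(ξ)` as `t → τ⁺`. -/
theorem kernel_dirac_initial_condition
    (C₁ C₂ σ₁ σ₂ lam : ℝ) (hσ₁ : 0 < σ₁) (hσ₂ : 0 < σ₂) (hlam : 0 ≤ lam)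
    (τ : ℝ) (ξ : ℝ × ℝ) (hξ₁ : 0 < ξ.1) (hξ₂ : 0 < ξ.2)
    (f : ℝ × ℝ → ℝ) (hf : Continuous f) (hfb : ∃ M : ℝ, ∀ x, |f x| ≤ M) :
    Tendsto (fun t : ℝ =>
        ∫ x in Set.Ici (0 : ℝ) ×ˢ Set.Ici (0 : ℝ), Kker C₁ C₂ σ₁ σ₂ lam t x τ ξ * f x)
      (nhdsWithin τ (Set.Ioi τ)) (nhds (f ξ)) := by
  obtain ⟨M, hM⟩ := hfb
  have hmeas : ∀ᶠ t in nhdsWithin τ (Set.Ioi τ),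
      AEStronglyMeasurable (KernelDiracAux.F C₁ C₂ σ₁ σ₂ lam τ ξ f t) volume :=
    Eventually.of_forall fun t => KernelDiracAux.measF C₁ C₂ σ₁ σ₂ lam τ ξ f hf t
  have hbound : ∀ᶠ t in nhdsWithin τ (Set.Ioi τ), ∀ᵐ y : ℝ × ℝ,
      ‖KernelDiracAux.F C₁ C₂ σ₁ σ₂ lam τ ξ f t y‖ ≤
        (M * (2 * π)⁻¹) * (Real.exp (|C₁| / σ₁ * |y.1| - y.1 ^ 2 / 2)
          * Real.exp (|C₂| / σ₂ * |y.2| - y.2 ^ 2 / 2)) := by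
    filter_upwards [Ioo_mem_nhdsGT_of_mem
      (show τ ∈ Set.Ico τ (τ + 1) from ⟨le_refl τ, by linarith⟩)] with t ht
    exact Eventually.of_forall fun y =>
      KernelDiracAux.boundF C₁ C₂ σ₁ σ₂ lam τ hσ₁ hσ₂ hlam ξ hξ₁ hξ₂ f M hM t ht.1 ht.2 y
  have hint : Integrable (fun y : ℝ × ℝ =>
      (M * (2 * π)⁻¹) * (Real.exp (|C₁| / σ₁ * |y.1| - y.1 ^ 2 / 2)
        * Real.exp (|C₂| / σ₂ * |y.2| - y.2 ^ 2 / 2))) volume :=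
    ((KernelDiracAux.integrable_exp_abs_quad (|C₁| / σ₁)).mul_prod
      (KernelDiracAux.integrable_exp_abs_quad (|C₂| / σ₂))).const_mul (M * (2 * π)⁻¹)
  have hlim : ∀ᵐ y : ℝ × ℝ, Tendsto (fun t => KernelDiracAux.F C₁ C₂ σ₁ σ₂ lam τ ξ f t y)
      (nhdsWithin τ (Set.Ioi τ))
      (nhds ((2 * π)⁻¹ * (Real.exp (-(y.1 ^ 2) / 2) * Real.exp (-(y.2 ^ 2) / 2)) * f ξ)) :=
    Eventually.of_forall fun y => KernelDiracAux.limF C₁ C₂ σ₁ σ₂ lam τ hσ₁ hσ₂ ξ hξ₁ hξ₂ f hf y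
  have h := MeasureTheory.tendsto_integral_filter_of_dominated_convergence _ hmeas hbound hint hlim
  rw [KernelDiracAux.intL f ξ] at h
  refine Tendsto.congr' ?_ h
  filter_upwards [self_mem_nhdsWithin] with t ht
  exact (KernelDiracAux.eqA C₁ C₂ σ₁ σ₂ lam τ hσ₁ hσ₂ ξ f t ht).symm
end

section
/- The kernel K is a nonnegative sub-stochastic kernel on the positive quadrant: for all τ < t and all ξ = (ξ₁,ξ₂) ∈ [0,∞)², one has K(t,x;τ,ξ) ≥ 0 for every x ∈ [0,∞)², and ∫_{[0,∞)×[0,∞)} K(t,x;τ,ξ) dx ≤ exp(−λ(t−τ)) ≤ 1. -/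
open Real MeasureTheory

/-- one-dimensional factor of the kernel -/
noncomputable def Kker1 (C σ s ξ x : ℝ) : ℝ :=
  Real.exp (-(C ^ 2 / (2 * σ ^ 2)) * s + (C / σ ^ 2) * (x - ξ))
    * ((Real.sqrt (2 * Real.pi * σ ^ 2 * s))⁻¹
        * (Real.exp (-(x - ξ) ^ 2 / (2 * σ ^ 2 * s))
            - Real.exp (-(x + ξ) ^ 2 / (2 * σ ^ 2 * s))))

/-- normalized Gaussian density -/
noncomputable def gaussD (v m x : ℝ) : ℝ :=
  (Real.sqrt (2 * Real.pi * v))⁻¹ * Real.exp (-(x - m) ^ 2 / (2 * v))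

lemma gaussD_nonneg (v m x : ℝ) : 0 ≤ gaussD v m x := by
  unfold gaussD; positivity

lemma gaussD_integrable (v m : ℝ) (hv : 0 < v) : Integrable (gaussD v m) := by
  have key : Integrable (fun x : ℝ => Real.exp (-(2 * v)⁻¹ * x ^ 2)) :=
    integrable_exp_neg_mul_sq (by positivity)
  have h2 := (key.comp_sub_right m).const_mul (Real.sqrt (2 * Real.pi * v))⁻¹
  have heq : gaussD v m
      = fun x : ℝ => (Real.sqrt (2 * Real.pi * v))⁻¹
          * Real.exp (-(2 * v)⁻¹ * (x - m) ^ 2) := by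
    funext x; unfold gaussD; congr 2; ring
  rw [heq]; exact h2

lemma gaussD_integral (v m : ℝ) (hv : 0 < v) : ∫ x : ℝ, gaussD v m x = 1 := by
  unfold gaussD
  rw [integral_const_mul]
  have h1 : (∫ x : ℝ, Real.exp (-(x - m) ^ 2 / (2 * v)))
      = ∫ x : ℝ, Real.exp (-(2 * v)⁻¹ * (x - m) ^ 2) := by
    congr 1; funext x; congr 1; ring
  rw [h1, integral_sub_right_eq_self (fun x => Real.exp (-(2 * v)⁻¹ * x ^ 2)) m,
    integral_gaussian]
  rw [show Real.pi / (2 * v)⁻¹ = 2 * Real.pi * v by field_simp]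
  rw [inv_mul_cancel₀ (Real.sqrt_pos.mpr (by positivity)).ne']

/-- complete-the-square decomposition of the 1-d kernel -/
lemma Kker1_eq (C σ s ξ : ℝ) (hσ : σ ≠ 0) (hs : s ≠ 0) (x : ℝ) :
    Kker1 C σ s ξ x
      = gaussD (σ ^ 2 * s) (ξ + C * s) x
        - Real.exp (-2 * C * ξ / σ ^ 2) * gaussD (σ ^ 2 * s) (C * s - ξ) x := by
  have h1 : Real.exp (-(C ^ 2 / (2 * σ ^ 2)) * s + (C / σ ^ 2) * (x - ξ))
      * Real.exp (-(x - ξ) ^ 2 / (2 * σ ^ 2 * s))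
      = Real.exp (-(x - (ξ + C * s)) ^ 2 / (2 * (σ ^ 2 * s))) := by
    rw [← Real.exp_add]; congr 1; field_simp; ring
  have h2 : Real.exp (-(C ^ 2 / (2 * σ ^ 2)) * s + (C / σ ^ 2) * (x - ξ))
      * Real.exp (-(x + ξ) ^ 2 / (2 * σ ^ 2 * s))
      = Real.exp (-2 * C * ξ / σ ^ 2)
        * Real.exp (-(x - (C * s - ξ)) ^ 2 / (2 * (σ ^ 2 * s))) := by
    rw [← Real.exp_add, ← Real.exp_add]; congr 1; field_simp; ring
  have hK : Kker1 C σ s ξ x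
      = (Real.sqrt (2 * Real.pi * σ ^ 2 * s))⁻¹
          * (Real.exp (-(C ^ 2 / (2 * σ ^ 2)) * s + (C / σ ^ 2) * (x - ξ))
              * Real.exp (-(x - ξ) ^ 2 / (2 * σ ^ 2 * s)))
        - (Real.sqrt (2 * Real.pi * σ ^ 2 * s))⁻¹
          * (Real.exp (-(C ^ 2 / (2 * σ ^ 2)) * s + (C / σ ^ 2) * (x - ξ))
              * Real.exp (-(x + ξ) ^ 2 / (2 * σ ^ 2 * s))) := by
    unfold Kker1; ring
  rw [hK, h1, h2]
  unfold gaussD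
  rw [show 2 * Real.pi * (σ ^ 2 * s) = 2 * Real.pi * σ ^ 2 * s by ring]
  ring

lemma Kker1_nonneg (C σ s ξ : ℝ) (hσ : 0 < σ) (hs : 0 < s) (hξ : 0 ≤ ξ)
    (x : ℝ) (hx : 0 ≤ x) : 0 ≤ Kker1 C σ s ξ x := by
  unfold Kker1
  have h : Real.exp (-(x + ξ) ^ 2 / (2 * σ ^ 2 * s))
      ≤ Real.exp (-(x - ξ) ^ 2 / (2 * σ ^ 2 * s)) := by
    apply Real.exp_le_exp.mpr
    apply div_le_div_of_nonneg_right ?_ (by positivity) |>.trans_eq rfl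
    nlinarith [mul_nonneg hx hξ]
  have := sub_nonneg.mpr h
  positivity

lemma Kker1_integrable (C σ s ξ : ℝ) (hσ : 0 < σ) (hs : 0 < s) :
    Integrable (Kker1 C σ s ξ) := by
  have hv : (0 : ℝ) < σ ^ 2 * s := by positivity
  have h1 := gaussD_integrable (σ ^ 2 * s) (ξ + C * s) hv
  have h2 := (gaussD_integrable (σ ^ 2 * s) (C * s - ξ) hv).const_mul
    (Real.exp (-2 * C * ξ / σ ^ 2))
  have heq : Kker1 C σ s ξ
      = fun x : ℝ => gaussD (σ ^ 2 * s) (ξ + C * s) x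
          - Real.exp (-2 * C * ξ / σ ^ 2) * gaussD (σ ^ 2 * s) (C * s - ξ) x := by
    funext x; exact Kker1_eq C σ s ξ hσ.ne' hs.ne' x
  rw [heq]; exact h1.sub h2

lemma Kker1_setIntegral_le_one (C σ s ξ : ℝ) (hσ : 0 < σ) (hs : 0 < s) :
    ∫ x in Set.Ici (0 : ℝ), Kker1 C σ s ξ x ≤ 1 := by
  have hv : (0 : ℝ) < σ ^ 2 * s := by positivity
  have hg := gaussD_integrable (σ ^ 2 * s) (ξ + C * s) hv
  have hle : ∫ x in Set.Ici (0 : ℝ), Kker1 C σ s ξ x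
      ≤ ∫ x in Set.Ici (0 : ℝ), gaussD (σ ^ 2 * s) (ξ + C * s) x := by
    apply setIntegral_mono_on ((Kker1_integrable C σ s ξ hσ hs).integrableOn)
      hg.integrableOn measurableSet_Ici
    intro x _
    rw [Kker1_eq C σ s ξ hσ.ne' hs.ne' x]
    have h0 : 0 ≤ Real.exp (-2 * C * ξ / σ ^ 2)
        * gaussD (σ ^ 2 * s) (C * s - ξ) x := by
      have := gaussD_nonneg (σ ^ 2 * s) (C * s - ξ) x
      positivity
    linarith
  refine hle.trans ?_
  calc ∫ x in Set.Ici (0 : ℝ), gaussD (σ ^ 2 * s) (ξ + C * s) x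
      ≤ ∫ x : ℝ, gaussD (σ ^ 2 * s) (ξ + C * s) x :=
        setIntegral_le_integral hg
          (Filter.Eventually.of_forall fun x => gaussD_nonneg _ _ _)
    _ = 1 := gaussD_integral _ _ hv

lemma Kker_eq_prod (C₁ C₂ σ₁ σ₂ lam t τ : ℝ) (ξ x : ℝ × ℝ) :
    Kker C₁ C₂ σ₁ σ₂ lam t x τ ξ
      = Real.exp (-lam * (t - τ)) * Kker1 C₁ σ₁ (t - τ) ξ.1 x.1
          * Kker1 C₂ σ₂ (t - τ) ξ.2 x.2 := by
  have e : Real.exp ((-(lam + C₁ ^ 2 / (2 * σ₁ ^ 2) + C₂ ^ 2 / (2 * σ₂ ^ 2))) * (t - τ)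
      + (C₁ / σ₁ ^ 2) * (x.1 - ξ.1) + (C₂ / σ₂ ^ 2) * (x.2 - ξ.2))
      = Real.exp (-lam * (t - τ))
        * Real.exp (-(C₁ ^ 2 / (2 * σ₁ ^ 2)) * (t - τ) + (C₁ / σ₁ ^ 2) * (x.1 - ξ.1))
        * Real.exp (-(C₂ ^ 2 / (2 * σ₂ ^ 2)) * (t - τ) + (C₂ / σ₂ ^ 2) * (x.2 - ξ.2)) := by
    rw [← Real.exp_add, ← Real.exp_add]; congr 1; ring
  simp only [Kker, Kker1]
  rw [e]; ring

/-- The kernel `K` is a nonnegative sub-stochastic kernel on the positive quadrant: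
`K(t,x;τ,ξ) ≥ 0` for `x, ξ ∈ [0,∞)²`, and
`∫_{[0,∞)²} K(t,x;τ,ξ) dx ≤ exp(−λ(t−τ)) ≤ 1`. -/
theorem kernel_substochastic
    (C₁ C₂ σ₁ σ₂ lam : ℝ) (hσ₁ : 0 < σ₁) (hσ₂ : 0 < σ₂) (hlam : 0 ≤ lam)
    (τ t : ℝ) (hτt : τ < t) (ξ : ℝ × ℝ) (hξ : ξ ∈ Set.Ici (0 : ℝ) ×ˢ Set.Ici (0 : ℝ)) :
    (∀ x ∈ Set.Ici (0 : ℝ) ×ˢ Set.Ici (0 : ℝ), 0 ≤ Kker C₁ C₂ σ₁ σ₂ lam t x τ ξ) ∧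
    (∫ x in Set.Ici (0 : ℝ) ×ˢ Set.Ici (0 : ℝ), Kker C₁ C₂ σ₁ σ₂ lam t x τ ξ)
      ≤ Real.exp (-lam * (t - τ)) ∧
    Real.exp (-lam * (t - τ)) ≤ 1 := by
  obtain ⟨hξ1, hξ2⟩ := hξ
  have hs : (0 : ℝ) < t - τ := sub_pos.mpr hτt
  have hξ1' : (0 : ℝ) ≤ ξ.1 := hξ1
  have hξ2' : (0 : ℝ) ≤ ξ.2 := hξ2
  refine ⟨?_, ?_, ?_⟩
  · rintro x ⟨hx1, hx2⟩
    rw [Kker_eq_prod]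
    have h1 := Kker1_nonneg C₁ σ₁ (t - τ) ξ.1 hσ₁ hs hξ1' x.1 hx1
    have h2 := Kker1_nonneg C₂ σ₂ (t - τ) ξ.2 hσ₂ hs hξ2' x.2 hx2
    positivity
  · have hrw : (∫ x in Set.Ici (0 : ℝ) ×ˢ Set.Ici (0 : ℝ),
        Kker C₁ C₂ σ₁ σ₂ lam t x τ ξ)
        = Real.exp (-lam * (t - τ))
          * ((∫ x in Set.Ici (0 : ℝ), Kker1 C₁ σ₁ (t - τ) ξ.1 x)
              * ∫ x in Set.Ici (0 : ℝ), Kker1 C₂ σ₂ (t - τ) ξ.2 x) := by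
      rw [show (∫ x in Set.Ici (0 : ℝ) ×ˢ Set.Ici (0 : ℝ),
          Kker C₁ C₂ σ₁ σ₂ lam t x τ ξ)
          = ∫ x in Set.Ici (0 : ℝ) ×ˢ Set.Ici (0 : ℝ),
              Real.exp (-lam * (t - τ))
                * (Kker1 C₁ σ₁ (t - τ) ξ.1 x.1 * Kker1 C₂ σ₂ (t - τ) ξ.2 x.2) from by
        congr 1; funext x; rw [Kker_eq_prod]; ring]
      rw [integral_const_mul]
      congr 1
      rw [Measure.volume_eq_prod, ← Measure.prod_restrict]
      exact integral_prod_mul (Kker1 C₁ σ₁ (t - τ) ξ.1) (Kker1 C₂ σ₂ (t - τ) ξ.2)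
    rw [hrw]
    have hI1n : 0 ≤ ∫ x in Set.Ici (0 : ℝ), Kker1 C₁ σ₁ (t - τ) ξ.1 x :=
      setIntegral_nonneg measurableSet_Ici fun x hx =>
        Kker1_nonneg C₁ σ₁ (t - τ) ξ.1 hσ₁ hs hξ1' x hx
    have hI2n : 0 ≤ ∫ x in Set.Ici (0 : ℝ), Kker1 C₂ σ₂ (t - τ) ξ.2 x :=
      setIntegral_nonneg measurableSet_Ici fun x hx =>
        Kker1_nonneg C₂ σ₂ (t - τ) ξ.2 hσ₂ hs hξ2' x hx
    have hI1 := Kker1_setIntegral_le_one C₁ σ₁ (t - τ) ξ.1 hσ₁ hs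
    have hI2 := Kker1_setIntegral_le_one C₂ σ₂ (t - τ) ξ.2 hσ₂ hs
    have hE : (0 : ℝ) < Real.exp (-lam * (t - τ)) := Real.exp_pos _
    exact mul_le_of_le_one_right hE.le (mul_le_one₀ hI1 hI2n hI2)
  · rw [Real.exp_le_one_iff]
    nlinarith
end

section
/- (Volterra bound underlying the Neumann series.) For all τ₀ ≤ τ < t ≤ T and all ξ ∈ [0,∞)², the kernel G satisfies ∫_{[0,∞)²} |G(t,x;τ,ξ)| dx ≤ (λ₁ + λ₂ + λ₃) · exp(−λ(t−τ)); consequently, for every bounded measurable Ψ on [τ₀,T] × [0,∞)² with sup-norm ‖Ψ‖, the iterates of the operator (𝒯Ψ)(τ,ξ) = ∫_τ^T ∫_{[0,∞)²} G(t,x;τ,ξ) Ψ(t,x) dx dt satisfy ‖𝒯^k Ψ‖ ≤ (λ^k (T−τ₀)^k / k!) · ‖Ψ‖ for every k ≥ 1. -/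
open Real MeasureTheory Set


noncomputable def gauss (v m x : ℝ) : ℝ :=
  (Real.sqrt (2 * Real.pi * v))⁻¹ * Real.exp (-(x - m) ^ 2 / (2 * v))

lemma gauss_nonneg (v m x : ℝ) : 0 ≤ gauss v m x := by
  unfold gauss
  positivity

lemma gauss_meas (v m : ℝ) : Measurable (gauss v m) := by
  unfold gauss; fun_prop

lemma gauss_shift (v m x y : ℝ) : gauss v m (x + y) = gauss v (m - y) x := by
  unfold gauss
  ring_nf

lemma integrable_gauss {v : ℝ} (hv : 0 < v) (m : ℝ) : Integrable (gauss v m) := by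
  unfold gauss
  apply Integrable.const_mul
  have h := (integrable_exp_neg_mul_sq (b := (2*v)⁻¹) (by positivity)).comp_sub_right m
  refine h.congr (Filter.Eventually.of_forall fun x => ?_)
  simp only []
  congr 1
  field_simp

lemma integral_gauss {v : ℝ} (hv : 0 < v) (m : ℝ) : ∫ x, gauss v m x = 1 := by
  unfold gauss
  rw [integral_const_mul]
  have h1 : (fun x : ℝ => Real.exp (-(x - m) ^ 2 / (2 * v)))
      = fun x => Real.exp (-(2*v)⁻¹ * (x - m) ^ 2) := by
    funext x; congr 1; field_simp
  rw [h1]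
  rw [integral_sub_right_eq_self (fun x => Real.exp (-(2*v)⁻¹ * x ^ 2)) m]
  rw [integral_gaussian]
  have : π / (2*v)⁻¹ = 2 * π * v := by field_simp
  rw [this, inv_mul_cancel₀]
  positivity

lemma lintegral_gauss_le {v : ℝ} (hv : 0 < v) (m : ℝ) (S : Set ℝ) :
    ∫⁻ x in S, ENNReal.ofReal (gauss v m x) ≤ 1 := by
  refine le_trans (setLIntegral_le_lintegral S _) ?_
  rw [← ofReal_integral_eq_lintegral_ofReal (integrable_gauss hv m)
      (Filter.Eventually.of_forall (gauss_nonneg v m))]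
  rw [integral_gauss hv m]
  simp

noncomputable def Kfac (C σ s ξ z : ℝ) : ℝ :=
  Real.exp (-(C ^ 2 / (2 * σ ^ 2)) * s + (C / σ ^ 2) * (z - ξ))
    * ((Real.sqrt (2 * Real.pi * σ ^ 2 * s))⁻¹
        * (Real.exp (-(z - ξ) ^ 2 / (2 * σ ^ 2 * s)) - Real.exp (-(z + ξ) ^ 2 / (2 * σ ^ 2 * s))))

lemma Kfact (C₁ C₂ σ₁ σ₂ lam t τ z₁ z₂ : ℝ) (ξ : ℝ × ℝ) :
    Kker C₁ C₂ σ₁ σ₂ lam t (z₁, z₂) τ ξ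
      = Real.exp (-lam * (t - τ)) * Kfac C₁ σ₁ (t - τ) ξ.1 z₁ * Kfac C₂ σ₂ (t - τ) ξ.2 z₂ := by
  have key : ∀ L B D u w : ℝ,
      Real.exp L * (Real.exp B * u) * (Real.exp D * w) = Real.exp (L + B + D) * u * w := by
    intros L B D u w; rw [Real.exp_add, Real.exp_add]; ring
  simp only [Kker, Kfac]
  rw [key]
  congr 3
  ring

lemma Kfac_nonneg {σ s : ℝ} (C : ℝ) (hσ : 0 < σ) (hs : 0 < s) {ξ z : ℝ}
    (hξ : 0 ≤ ξ) (hz : 0 ≤ z) : 0 ≤ Kfac C σ s ξ z := by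
  unfold Kfac
  have h1 : Real.exp (-(z + ξ) ^ 2 / (2 * σ ^ 2 * s)) ≤ Real.exp (-(z - ξ) ^ 2 / (2 * σ ^ 2 * s)) := by
    apply Real.exp_le_exp.2
    apply (div_le_div_iff_of_pos_right (by positivity)).2
    nlinarith
  exact mul_nonneg (Real.exp_nonneg _)
    (mul_nonneg (inv_nonneg.2 (Real.sqrt_nonneg _)) (sub_nonneg.2 h1))

lemma Kfac_le {σ s : ℝ} (C : ℝ) (hσ : 0 < σ) (hs : 0 < s) (ξ z : ℝ) :
    Kfac C σ s ξ z ≤ gauss (σ ^ 2 * s) (ξ + C * s) z := by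
  have h0 : Kfac C σ s ξ z ≤ Real.exp (-(C ^ 2 / (2 * σ ^ 2)) * s + (C / σ ^ 2) * (z - ξ))
      * ((Real.sqrt (2 * Real.pi * σ ^ 2 * s))⁻¹ * Real.exp (-(z - ξ) ^ 2 / (2 * σ ^ 2 * s))) := by
    unfold Kfac
    have : Real.exp (-(z - ξ) ^ 2 / (2 * σ ^ 2 * s)) - Real.exp (-(z + ξ) ^ 2 / (2 * σ ^ 2 * s))
        ≤ Real.exp (-(z - ξ) ^ 2 / (2 * σ ^ 2 * s)) := by
      have := Real.exp_pos (-(z + ξ) ^ 2 / (2 * σ ^ 2 * s)); linarith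
    gcongr
  refine h0.trans_eq ?_
  unfold gauss
  rw [show 2 * Real.pi * (σ ^ 2 * s) = 2 * Real.pi * σ ^ 2 * s by ring]
  rw [mul_comm, mul_assoc, ← Real.exp_add]
  congr 2
  field_simp
  ring

lemma lintegral_Ici_shift (h : ℝ → ENNReal) (hm : Measurable h) (c : ℝ) :
    ∫⁻ z in Set.Ici c, h z = ∫⁻ y in Set.Ici 0, h (y + c) := by
  have hpre : (fun y : ℝ => y + c) ⁻¹' Set.Ici c = Set.Ici 0 := by
    ext y; simp
  have h1 : volume.restrict (Set.Ici c)
      = Measure.map (fun y : ℝ => y + c) (volume.restrict (Set.Ici 0)) := by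
    conv_lhs => rw [← map_add_right_eq_self volume c]
    rw [Measure.restrict_map (measurable_add_const c) measurableSet_Ici, hpre]
  rw [h1, lintegral_map hm (measurable_add_const c)]

lemma lintegral_p_eq_one (p : ℝ → ℝ) (hp : ∀ y, 0 ≤ p y)
    (hpi : ∫ y in Set.Ici (0:ℝ), p y = 1) :
    ∫⁻ y in Set.Ici (0:ℝ), ENNReal.ofReal (p y) = 1 := by
  have hint : Integrable p (volume.restrict (Set.Ici (0:ℝ))) := by
    by_contra h
    rw [integral_undef h] at hpi
    norm_num at hpi
  rw [← ofReal_integral_eq_lintegral_ofReal hint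
    (Filter.Eventually.of_forall hp), hpi]
  simp

/-- convolution-type bound: `∫∫ g(y+a) p(y) ≤ 1`. -/
lemma conv_bound {v : ℝ} (hv : 0 < v) (m : ℝ) (p : ℝ → ℝ) (hpm : Measurable p)
    (hp : ∀ y, 0 ≤ p y) (hpi : ∫ y in Set.Ici (0:ℝ), p y = 1) :
    ∫⁻ a in Set.Ici (0:ℝ), (∫⁻ y in Set.Ici (0:ℝ),
      ENNReal.ofReal (gauss v m (y + a)) * ENNReal.ofReal (p y)) ≤ 1 := by
  rw [lintegral_lintegral_swap]
  · calc ∫⁻ y in Set.Ici (0:ℝ), (∫⁻ a in Set.Ici (0:ℝ),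
        ENNReal.ofReal (gauss v m (y + a)) * ENNReal.ofReal (p y))
        ≤ ∫⁻ y in Set.Ici (0:ℝ), ENNReal.ofReal (p y) := by
          apply lintegral_mono fun y => ?_
          have : (∫⁻ a in Set.Ici (0:ℝ), ENNReal.ofReal (gauss v m (y + a)) * ENNReal.ofReal (p y))
              = (∫⁻ a in Set.Ici (0:ℝ), ENNReal.ofReal (gauss v m (y + a))) * ENNReal.ofReal (p y) := by
            rw [lintegral_mul_const]
            exact (ENNReal.measurable_ofReal.comp ((gauss_meas v m).comp (measurable_id.const_add y)))
          rw [this]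
          calc (∫⁻ a in Set.Ici (0:ℝ), ENNReal.ofReal (gauss v m (y + a))) * ENNReal.ofReal (p y)
              ≤ 1 * ENNReal.ofReal (p y) := by
                gcongr
                have : ∀ a : ℝ, gauss v m (y + a) = gauss v (m - y) a := by
                  intro a; rw [add_comm, gauss_shift]
                simp only [this]
                exact lintegral_gauss_le hv _ _
            _ = ENNReal.ofReal (p y) := one_mul _
      _ = 1 := lintegral_p_eq_one p hp hpi
  · apply Measurable.aemeasurable
    apply Measurable.fun_mul
    · exact ENNReal.measurable_ofReal.comp ((gauss_meas v m).comp (by fun_prop))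
    · exact ENNReal.measurable_ofReal.comp (hpm.comp (by fun_prop))

lemma prod_quadrant_bound (A B : ℝ → ENNReal) (hA : Measurable A) (hB : Measurable B)
    (hA1 : ∫⁻ a in Set.Ici (0:ℝ), A a ≤ 1) (hB1 : ∫⁻ b in Set.Ici (0:ℝ), B b ≤ 1)
    (E : ENNReal) :
    ∫⁻ x in Set.Ici (0:ℝ) ×ˢ Set.Ici (0:ℝ), E * A x.1 * B x.2 ≤ E := by
  have hQ : (volume : Measure (ℝ × ℝ)).restrict (Set.Ici (0:ℝ) ×ˢ Set.Ici (0:ℝ))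
      = (volume.restrict (Set.Ici (0:ℝ))).prod (volume.restrict (Set.Ici (0:ℝ))) := by
    rw [Measure.prod_restrict, ← Measure.volume_eq_prod]
  rw [hQ]
  have : ∀ x : ℝ × ℝ, E * A x.1 * B x.2 = (fun a => E * A a) x.1 * B x.2 := fun x => rfl
  simp only [this]
  rw [lintegral_prod_mul ((hA.const_mul E).aemeasurable) hB.aemeasurable]
  calc (∫⁻ a in Set.Ici (0:ℝ), E * A a) * ∫⁻ b in Set.Ici (0:ℝ), B b
      = E * (∫⁻ a in Set.Ici (0:ℝ), A a) * ∫⁻ b in Set.Ici (0:ℝ), B b := by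
        rw [lintegral_const_mul E hA]
    _ ≤ E * 1 * 1 := by gcongr
    _ = E := by simp

lemma Kker_meas (C₁ C₂ σ₁ σ₂ lam t τ : ℝ) (ξ : ℝ × ℝ) :
    Measurable fun x : ℝ × ℝ => Kker C₁ C₂ σ₁ σ₂ lam t x τ ξ := by
  unfold Kker; fun_prop

section Meas

variable (K : ℝ × ℝ → ℝ) (p₁ p₂ : ℝ → ℝ)


/-- measurability of `x ↦ ∫ z in Ici x.1, K (z, x.2) * p₁ (z - x.1)` -/
lemma meas_T1 (hK : Measurable K) (hp₁m : Measurable p₁) : Measurable fun x : ℝ × ℝ =>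
    ∫ z in Set.Ici x.1, K (z, x.2) * p₁ (z - x.1) := by
  have : (fun x : ℝ × ℝ => ∫ z in Set.Ici x.1, K (z, x.2) * p₁ (z - x.1))
      = fun x : ℝ × ℝ => ∫ z, (fun q : (ℝ × ℝ) × ℝ =>
          if q.1.1 ≤ q.2 then K (q.2, q.1.2) * p₁ (q.2 - q.1.1) else 0) (x, z) := by
    funext x
    rw [← integral_indicator measurableSet_Ici]
    simp [Set.indicator_apply]
  rw [this]
  apply StronglyMeasurable.measurable
  apply StronglyMeasurable.integral_prod_right
  apply Measurable.stronglyMeasurable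
  refine Measurable.ite (measurableSet_le (by fun_prop) (by fun_prop)) ?_ measurable_const
  exact (hK.comp (by fun_prop)).mul (hp₁m.comp (by fun_prop))

lemma meas_T2 (hK : Measurable K) (hp₂m : Measurable p₂) : Measurable fun x : ℝ × ℝ =>
    ∫ z in Set.Ici x.2, K (x.1, z) * p₂ (z - x.2) := by
  have : (fun x : ℝ × ℝ => ∫ z in Set.Ici x.2, K (x.1, z) * p₂ (z - x.2))
      = fun x : ℝ × ℝ => ∫ z, (fun q : (ℝ × ℝ) × ℝ =>
          if q.1.2 ≤ q.2 then K (q.1.1, q.2) * p₂ (q.2 - q.1.2) else 0) (x, z) := by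
    funext x
    rw [← integral_indicator measurableSet_Ici]
    simp [Set.indicator_apply]
  rw [this]
  apply StronglyMeasurable.measurable
  apply StronglyMeasurable.integral_prod_right
  apply Measurable.stronglyMeasurable
  refine Measurable.ite (measurableSet_le (by fun_prop) (by fun_prop)) ?_ measurable_const
  exact (hK.comp (by fun_prop)).mul (hp₂m.comp (by fun_prop))

lemma meas_T3 (hK : Measurable K) (hp₁m : Measurable p₁) (hp₂m : Measurable p₂) : Measurable fun x : ℝ × ℝ =>
    ∫ z₁ in Set.Ici x.1, ∫ z₂ in Set.Ici x.2, K (z₁, z₂) * p₁ (z₁ - x.1) * p₂ (z₂ - x.2) := by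
  have hinner : Measurable fun q : (ℝ × ℝ) × ℝ =>
      ∫ z₂ in Set.Ici q.1.2, K (q.2, z₂) * p₁ (q.2 - q.1.1) * p₂ (z₂ - q.1.2) := by
    have : (fun q : (ℝ × ℝ) × ℝ =>
        ∫ z₂ in Set.Ici q.1.2, K (q.2, z₂) * p₁ (q.2 - q.1.1) * p₂ (z₂ - q.1.2))
        = fun q : (ℝ × ℝ) × ℝ => ∫ z₂, (fun r : ((ℝ × ℝ) × ℝ) × ℝ =>
            if r.1.1.2 ≤ r.2 then K (r.1.2, r.2) * p₁ (r.1.2 - r.1.1.1) * p₂ (r.2 - r.1.1.2)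
            else 0) (q, z₂) := by
      funext q
      rw [← integral_indicator measurableSet_Ici]
      simp [Set.indicator_apply]
    rw [this]
    apply StronglyMeasurable.measurable
    apply StronglyMeasurable.integral_prod_right
    apply Measurable.stronglyMeasurable
    refine Measurable.ite (measurableSet_le (by fun_prop) (by fun_prop)) ?_ measurable_const
    exact ((hK.comp (by fun_prop)).mul (hp₁m.comp (by fun_prop))).mul (hp₂m.comp (by fun_prop))
  have : (fun x : ℝ × ℝ =>
      ∫ z₁ in Set.Ici x.1, ∫ z₂ in Set.Ici x.2, K (z₁, z₂) * p₁ (z₁ - x.1) * p₂ (z₂ - x.2))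
      = fun x : ℝ × ℝ => ∫ z₁, (fun q : (ℝ × ℝ) × ℝ =>
          if q.1.1 ≤ q.2 then
            ∫ z₂ in Set.Ici q.1.2, K (q.2, z₂) * p₁ (q.2 - q.1.1) * p₂ (z₂ - q.1.2)
          else 0) (x, z₁) := by
    funext x
    rw [← integral_indicator measurableSet_Ici]
    simp [Set.indicator_apply]
  rw [this]
  apply StronglyMeasurable.measurable
  apply StronglyMeasurable.integral_prod_right
  apply Measurable.stronglyMeasurable
  exact Measurable.ite (measurableSet_le (by fun_prop) (by fun_prop)) hinner measurable_const

/-- measurability of the `lintegral` version `L₁`. -/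
lemma meas_L1 (hK : Measurable K) (hp₁m : Measurable p₁) : Measurable fun x : ℝ × ℝ =>
    ∫⁻ z in Set.Ici x.1, ENNReal.ofReal (K (z, x.2) * p₁ (z - x.1)) := by
  have : (fun x : ℝ × ℝ => ∫⁻ z in Set.Ici x.1, ENNReal.ofReal (K (z, x.2) * p₁ (z - x.1)))
      = fun x : ℝ × ℝ => ∫⁻ z, (fun q : (ℝ × ℝ) × ℝ =>
          if q.1.1 ≤ q.2 then ENNReal.ofReal (K (q.2, q.1.2) * p₁ (q.2 - q.1.1)) else 0) (x, z) := by
    funext x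
    rw [← lintegral_indicator measurableSet_Ici]
    simp [Set.indicator_apply]
  rw [this]
  apply Measurable.lintegral_prod_right
  refine Measurable.ite (measurableSet_le (by fun_prop) (by fun_prop)) ?_ measurable_const
  exact ENNReal.measurable_ofReal.comp ((hK.comp (by fun_prop)).mul (hp₁m.comp (by fun_prop)))

lemma meas_L2 (hK : Measurable K) (hp₂m : Measurable p₂) : Measurable fun x : ℝ × ℝ =>
    ∫⁻ z in Set.Ici x.2, ENNReal.ofReal (K (x.1, z) * p₂ (z - x.2)) := by
  have : (fun x : ℝ × ℝ => ∫⁻ z in Set.Ici x.2, ENNReal.ofReal (K (x.1, z) * p₂ (z - x.2)))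
      = fun x : ℝ × ℝ => ∫⁻ z, (fun q : (ℝ × ℝ) × ℝ =>
          if q.1.2 ≤ q.2 then ENNReal.ofReal (K (q.1.1, q.2) * p₂ (q.2 - q.1.2)) else 0) (x, z) := by
    funext x
    rw [← lintegral_indicator measurableSet_Ici]
    simp [Set.indicator_apply]
  rw [this]
  apply Measurable.lintegral_prod_right
  refine Measurable.ite (measurableSet_le (by fun_prop) (by fun_prop)) ?_ measurable_const
  exact ENNReal.measurable_ofReal.comp ((hK.comp (by fun_prop)).mul (hp₂m.comp (by fun_prop)))

lemma meas_L3 (hK : Measurable K) (hp₁m : Measurable p₁) (hp₂m : Measurable p₂) : Measurable fun x : ℝ × ℝ =>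
    ∫⁻ z₁ in Set.Ici x.1, ∫⁻ z₂ in Set.Ici x.2,
      ENNReal.ofReal (K (z₁, z₂) * p₁ (z₁ - x.1) * p₂ (z₂ - x.2)) := by
  have hinner : Measurable fun q : (ℝ × ℝ) × ℝ =>
      ∫⁻ z₂ in Set.Ici q.1.2, ENNReal.ofReal (K (q.2, z₂) * p₁ (q.2 - q.1.1) * p₂ (z₂ - q.1.2)) := by
    have : (fun q : (ℝ × ℝ) × ℝ =>
        ∫⁻ z₂ in Set.Ici q.1.2, ENNReal.ofReal (K (q.2, z₂) * p₁ (q.2 - q.1.1) * p₂ (z₂ - q.1.2)))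
        = fun q : (ℝ × ℝ) × ℝ => ∫⁻ z₂, (fun r : ((ℝ × ℝ) × ℝ) × ℝ =>
            if r.1.1.2 ≤ r.2 then
              ENNReal.ofReal (K (r.1.2, r.2) * p₁ (r.1.2 - r.1.1.1) * p₂ (r.2 - r.1.1.2))
            else 0) (q, z₂) := by
      funext q
      rw [← lintegral_indicator measurableSet_Ici]
      simp [Set.indicator_apply]
    rw [this]
    apply Measurable.lintegral_prod_right
    refine Measurable.ite (measurableSet_le (by fun_prop) (by fun_prop)) ?_ measurable_const
    exact ENNReal.measurable_ofReal.comp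
      (((hK.comp (by fun_prop)).mul (hp₁m.comp (by fun_prop))).mul (hp₂m.comp (by fun_prop)))
  have : (fun x : ℝ × ℝ => ∫⁻ z₁ in Set.Ici x.1, ∫⁻ z₂ in Set.Ici x.2,
      ENNReal.ofReal (K (z₁, z₂) * p₁ (z₁ - x.1) * p₂ (z₂ - x.2)))
      = fun x : ℝ × ℝ => ∫⁻ z₁, (fun q : (ℝ × ℝ) × ℝ =>
          if q.1.1 ≤ q.2 then
            ∫⁻ z₂ in Set.Ici q.1.2, ENNReal.ofReal (K (q.2, z₂) * p₁ (q.2 - q.1.1) * p₂ (z₂ - q.1.2))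
          else 0) (x, z₁) := by
    funext x
    rw [← lintegral_indicator measurableSet_Ici]
    simp [Set.indicator_apply]
  rw [this]
  apply Measurable.lintegral_prod_right
  exact Measurable.ite (measurableSet_le (by fun_prop) (by fun_prop)) hinner measurable_const

end Meas

section GB

variable (K : ℝ × ℝ → ℝ) (e : ℝ) (g₁ g₂ : ℝ → ℝ) (p₁ p₂ : ℝ → ℝ)

/-- generic convolution bound -/
lemma conv_bound_gen (g : ℝ → ℝ) (hgm : Measurable g)
    (hgb : ∀ y : ℝ, ∫⁻ a in Set.Ici (0:ℝ), ENNReal.ofReal (g (y + a)) ≤ 1)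
    (p : ℝ → ℝ) (hpm : Measurable p) (hp : ∀ y, 0 ≤ p y)
    (hpi : ∫ y in Set.Ici (0:ℝ), p y = 1) :
    ∫⁻ a in Set.Ici (0:ℝ), ∫⁻ y in Set.Ici (0:ℝ),
      ENNReal.ofReal (g (y + a)) * ENNReal.ofReal (p y) ≤ 1 := by
  rw [lintegral_lintegral_swap]
  · calc ∫⁻ y in Set.Ici (0:ℝ), (∫⁻ a in Set.Ici (0:ℝ),
        ENNReal.ofReal (g (y + a)) * ENNReal.ofReal (p y))
        ≤ ∫⁻ y in Set.Ici (0:ℝ), ENNReal.ofReal (p y) := by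
          apply lintegral_mono fun y => ?_
          have : (∫⁻ a in Set.Ici (0:ℝ), ENNReal.ofReal (g (y + a)) * ENNReal.ofReal (p y))
              = (∫⁻ a in Set.Ici (0:ℝ), ENNReal.ofReal (g (y + a))) * ENNReal.ofReal (p y) := by
            rw [lintegral_mul_const]
            exact ENNReal.measurable_ofReal.comp (hgm.comp (by fun_prop))
          rw [this]
          calc (∫⁻ a in Set.Ici (0:ℝ), ENNReal.ofReal (g (y + a))) * ENNReal.ofReal (p y)
              ≤ 1 * ENNReal.ofReal (p y) := by gcongr; exact hgb y
            _ = ENNReal.ofReal (p y) := one_mul _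
      _ = 1 := lintegral_p_eq_one p hp hpi
  · apply Measurable.aemeasurable
    apply Measurable.fun_mul
    · exact ENNReal.measurable_ofReal.comp (hgm.comp (by fun_prop))
    · exact ENNReal.measurable_ofReal.comp (hpm.comp (by fun_prop))

lemma L1_bound (hKm : Measurable K) (he : 0 ≤ e)
    (hg₁m : Measurable g₁) (hg₂m : Measurable g₂)
    (hg₁nn : ∀ z, 0 ≤ g₁ z) (hg₂nn : ∀ z, 0 ≤ g₂ z)
    (hKle : ∀ z : ℝ × ℝ, 0 ≤ z.1 → 0 ≤ z.2 → K z ≤ e * g₁ z.1 * g₂ z.2)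
    (hg₁b : ∀ y : ℝ, ∫⁻ a in Set.Ici (0:ℝ), ENNReal.ofReal (g₁ (y + a)) ≤ 1)
    (hg₂b : ∀ y : ℝ, ∫⁻ a in Set.Ici (0:ℝ), ENNReal.ofReal (g₂ (y + a)) ≤ 1)
    (hp₁m : Measurable p₁) (hp₁ : ∀ y, 0 ≤ p₁ y)
    (hp₁int : ∫ y in Set.Ici (0:ℝ), p₁ y = 1) :
    ∫⁻ x in Set.Ici (0:ℝ) ×ˢ Set.Ici (0:ℝ),
        ∫⁻ z in Set.Ici x.1, ENNReal.ofReal (K (z, x.2) * p₁ (z - x.1))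
      ≤ ENNReal.ofReal e := by
  have hQm : MeasurableSet (Set.Ici (0:ℝ) ×ˢ Set.Ici (0:ℝ)) :=
    measurableSet_Ici.prod measurableSet_Ici
  have hAm : Measurable fun a : ℝ => ∫⁻ y in Set.Ici (0:ℝ),
      ENNReal.ofReal (g₁ (y + a)) * ENNReal.ofReal (p₁ y) := by
    apply Measurable.lintegral_prod_right (f := fun (a : ℝ) (y : ℝ) =>
      ENNReal.ofReal (g₁ (y + a)) * ENNReal.ofReal (p₁ y))
    apply Measurable.fun_mul
    · exact ENNReal.measurable_ofReal.comp (hg₁m.comp (by fun_prop))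
    · exact ENNReal.measurable_ofReal.comp (hp₁m.comp (by fun_prop))
  have step : ∀ x ∈ Set.Ici (0:ℝ) ×ˢ Set.Ici (0:ℝ),
      (∫⁻ z in Set.Ici x.1, ENNReal.ofReal (K (z, x.2) * p₁ (z - x.1)))
        ≤ ENNReal.ofReal e
            * (∫⁻ y in Set.Ici (0:ℝ), ENNReal.ofReal (g₁ (y + x.1)) * ENNReal.ofReal (p₁ y))
            * ENNReal.ofReal (g₂ x.2) := by
    intro x hx
    rw [lintegral_Ici_shift (fun z => ENNReal.ofReal (K (z, x.2) * p₁ (z - x.1)))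
      (by fun_prop) x.1]
    have hb : ∀ y ∈ Set.Ici (0:ℝ),
        ENNReal.ofReal (K (y + x.1, x.2) * p₁ (y + x.1 - x.1))
          ≤ (ENNReal.ofReal e * ENNReal.ofReal (g₂ x.2))
            * (ENNReal.ofReal (g₁ (y + x.1)) * ENNReal.ofReal (p₁ y)) := by
      intro y hy
      have hy0 : (0:ℝ) ≤ y := hy
      have h1 : K (y + x.1, x.2) * p₁ (y + x.1 - x.1)
          ≤ (e * g₁ (y + x.1) * g₂ x.2) * p₁ y := by
        rw [add_sub_cancel_right]
        exact mul_le_mul_of_nonneg_right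
          (hKle (y + x.1, x.2) (by have := hx.1; simp only [Set.mem_Ici] at this ⊢; linarith) hx.2)
          (hp₁ y)
      calc ENNReal.ofReal (K (y + x.1, x.2) * p₁ (y + x.1 - x.1))
          ≤ ENNReal.ofReal ((e * g₁ (y + x.1) * g₂ x.2) * p₁ y) := ENNReal.ofReal_le_ofReal h1
        _ = (ENNReal.ofReal e * ENNReal.ofReal (g₂ x.2))
            * (ENNReal.ofReal (g₁ (y + x.1)) * ENNReal.ofReal (p₁ y)) := by
            rw [ENNReal.ofReal_mul (mul_nonneg (mul_nonneg he (hg₁nn _)) (hg₂nn _)),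
              ENNReal.ofReal_mul (mul_nonneg he (hg₁nn _)), ENNReal.ofReal_mul he]
            ring
    calc (∫⁻ y in Set.Ici (0:ℝ), ENNReal.ofReal (K (y + x.1, x.2) * p₁ (y + x.1 - x.1)))
        ≤ ∫⁻ y in Set.Ici (0:ℝ), (ENNReal.ofReal e * ENNReal.ofReal (g₂ x.2))
            * (ENNReal.ofReal (g₁ (y + x.1)) * ENNReal.ofReal (p₁ y)) := by
          apply lintegral_mono_ae
          filter_upwards [ae_restrict_mem measurableSet_Ici] with y hy using hb y hy
      _ = (ENNReal.ofReal e * ENNReal.ofReal (g₂ x.2))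
            * ∫⁻ y in Set.Ici (0:ℝ), ENNReal.ofReal (g₁ (y + x.1)) * ENNReal.ofReal (p₁ y) := by
          rw [lintegral_const_mul]
          apply Measurable.fun_mul
          · exact ENNReal.measurable_ofReal.comp (hg₁m.comp (by fun_prop))
          · exact ENNReal.measurable_ofReal.comp (hp₁m.comp (by fun_prop))
      _ = ENNReal.ofReal e
            * (∫⁻ y in Set.Ici (0:ℝ), ENNReal.ofReal (g₁ (y + x.1)) * ENNReal.ofReal (p₁ y))
            * ENNReal.ofReal (g₂ x.2) := by ring
  calc ∫⁻ x in Set.Ici (0:ℝ) ×ˢ Set.Ici (0:ℝ),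
        ∫⁻ z in Set.Ici x.1, ENNReal.ofReal (K (z, x.2) * p₁ (z - x.1))
      ≤ ∫⁻ x in Set.Ici (0:ℝ) ×ˢ Set.Ici (0:ℝ), ENNReal.ofReal e
          * (∫⁻ y in Set.Ici (0:ℝ), ENNReal.ofReal (g₁ (y + x.1)) * ENNReal.ofReal (p₁ y))
          * ENNReal.ofReal (g₂ x.2) := by
        apply lintegral_mono_ae
        filter_upwards [ae_restrict_mem hQm] with x hx using step x hx
    _ ≤ ENNReal.ofReal e := by
        apply prod_quadrant_bound _ _ hAm (ENNReal.measurable_ofReal.comp hg₂m)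
          (conv_bound_gen g₁ hg₁m hg₁b p₁ hp₁m hp₁ hp₁int)
        have := hg₂b 0
        simpa using this

lemma L2_bound (hKm : Measurable K) (he : 0 ≤ e)
    (hg₁m : Measurable g₁) (hg₂m : Measurable g₂)
    (hg₁nn : ∀ z, 0 ≤ g₁ z) (hg₂nn : ∀ z, 0 ≤ g₂ z)
    (hKle : ∀ z : ℝ × ℝ, 0 ≤ z.1 → 0 ≤ z.2 → K z ≤ e * g₁ z.1 * g₂ z.2)
    (hg₁b : ∀ y : ℝ, ∫⁻ a in Set.Ici (0:ℝ), ENNReal.ofReal (g₁ (y + a)) ≤ 1)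
    (hg₂b : ∀ y : ℝ, ∫⁻ a in Set.Ici (0:ℝ), ENNReal.ofReal (g₂ (y + a)) ≤ 1)
    (hp₂m : Measurable p₂) (hp₂ : ∀ y, 0 ≤ p₂ y)
    (hp₂int : ∫ y in Set.Ici (0:ℝ), p₂ y = 1) :
    ∫⁻ x in Set.Ici (0:ℝ) ×ˢ Set.Ici (0:ℝ),
        ∫⁻ z in Set.Ici x.2, ENNReal.ofReal (K (x.1, z) * p₂ (z - x.2))
      ≤ ENNReal.ofReal e := by
  have hQm : MeasurableSet (Set.Ici (0:ℝ) ×ˢ Set.Ici (0:ℝ)) :=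
    measurableSet_Ici.prod measurableSet_Ici
  have hBm : Measurable fun b : ℝ => ∫⁻ y in Set.Ici (0:ℝ),
      ENNReal.ofReal (g₂ (y + b)) * ENNReal.ofReal (p₂ y) := by
    apply Measurable.lintegral_prod_right (f := fun (b : ℝ) (y : ℝ) =>
      ENNReal.ofReal (g₂ (y + b)) * ENNReal.ofReal (p₂ y))
    apply Measurable.fun_mul
    · exact ENNReal.measurable_ofReal.comp (hg₂m.comp (by fun_prop))
    · exact ENNReal.measurable_ofReal.comp (hp₂m.comp (by fun_prop))
  have step : ∀ x ∈ Set.Ici (0:ℝ) ×ˢ Set.Ici (0:ℝ),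
      (∫⁻ z in Set.Ici x.2, ENNReal.ofReal (K (x.1, z) * p₂ (z - x.2)))
        ≤ ENNReal.ofReal e * ENNReal.ofReal (g₁ x.1)
            * (∫⁻ y in Set.Ici (0:ℝ), ENNReal.ofReal (g₂ (y + x.2)) * ENNReal.ofReal (p₂ y)) := by
    intro x hx
    rw [lintegral_Ici_shift (fun z => ENNReal.ofReal (K (x.1, z) * p₂ (z - x.2)))
      (by fun_prop) x.2]
    have hb : ∀ y ∈ Set.Ici (0:ℝ),
        ENNReal.ofReal (K (x.1, y + x.2) * p₂ (y + x.2 - x.2))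
          ≤ (ENNReal.ofReal e * ENNReal.ofReal (g₁ x.1))
            * (ENNReal.ofReal (g₂ (y + x.2)) * ENNReal.ofReal (p₂ y)) := by
      intro y hy
      have hy0 : (0:ℝ) ≤ y := hy
      have h1 : K (x.1, y + x.2) * p₂ (y + x.2 - x.2)
          ≤ (e * g₁ x.1 * g₂ (y + x.2)) * p₂ y := by
        rw [add_sub_cancel_right]
        exact mul_le_mul_of_nonneg_right
          (hKle (x.1, y + x.2) hx.1 (by have := hx.2; simp only [Set.mem_Ici] at this ⊢; linarith))
          (hp₂ y)
      calc ENNReal.ofReal (K (x.1, y + x.2) * p₂ (y + x.2 - x.2))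
          ≤ ENNReal.ofReal ((e * g₁ x.1 * g₂ (y + x.2)) * p₂ y) := ENNReal.ofReal_le_ofReal h1
        _ = (ENNReal.ofReal e * ENNReal.ofReal (g₁ x.1))
            * (ENNReal.ofReal (g₂ (y + x.2)) * ENNReal.ofReal (p₂ y)) := by
            rw [ENNReal.ofReal_mul (mul_nonneg (mul_nonneg he (hg₁nn _)) (hg₂nn _)),
              ENNReal.ofReal_mul (mul_nonneg he (hg₁nn _)), ENNReal.ofReal_mul he]
            ring
    calc (∫⁻ y in Set.Ici (0:ℝ), ENNReal.ofReal (K (x.1, y + x.2) * p₂ (y + x.2 - x.2)))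
        ≤ ∫⁻ y in Set.Ici (0:ℝ), (ENNReal.ofReal e * ENNReal.ofReal (g₁ x.1))
            * (ENNReal.ofReal (g₂ (y + x.2)) * ENNReal.ofReal (p₂ y)) := by
          apply lintegral_mono_ae
          filter_upwards [ae_restrict_mem measurableSet_Ici] with y hy using hb y hy
      _ = ENNReal.ofReal e * ENNReal.ofReal (g₁ x.1)
            * (∫⁻ y in Set.Ici (0:ℝ), ENNReal.ofReal (g₂ (y + x.2)) * ENNReal.ofReal (p₂ y)) := by
          rw [lintegral_const_mul]
          apply Measurable.fun_mul
          · exact ENNReal.measurable_ofReal.comp (hg₂m.comp (by fun_prop))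
          · exact ENNReal.measurable_ofReal.comp (hp₂m.comp (by fun_prop))
  calc ∫⁻ x in Set.Ici (0:ℝ) ×ˢ Set.Ici (0:ℝ),
        ∫⁻ z in Set.Ici x.2, ENNReal.ofReal (K (x.1, z) * p₂ (z - x.2))
      ≤ ∫⁻ x in Set.Ici (0:ℝ) ×ˢ Set.Ici (0:ℝ), ENNReal.ofReal e
          * ENNReal.ofReal (g₁ x.1)
          * (∫⁻ y in Set.Ici (0:ℝ), ENNReal.ofReal (g₂ (y + x.2)) * ENNReal.ofReal (p₂ y)) := by
        apply lintegral_mono_ae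
        filter_upwards [ae_restrict_mem hQm] with x hx using step x hx
    _ ≤ ENNReal.ofReal e := by
        apply prod_quadrant_bound _ _ (ENNReal.measurable_ofReal.comp hg₁m) hBm
        · have := hg₁b 0
          simpa using this
        · exact conv_bound_gen g₂ hg₂m hg₂b p₂ hp₂m hp₂ hp₂int

lemma L3_bound (hKm : Measurable K) (he : 0 ≤ e)
    (hg₁m : Measurable g₁) (hg₂m : Measurable g₂)
    (hg₁nn : ∀ z, 0 ≤ g₁ z) (hg₂nn : ∀ z, 0 ≤ g₂ z)
    (hKle : ∀ z : ℝ × ℝ, 0 ≤ z.1 → 0 ≤ z.2 → K z ≤ e * g₁ z.1 * g₂ z.2)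
    (hg₁b : ∀ y : ℝ, ∫⁻ a in Set.Ici (0:ℝ), ENNReal.ofReal (g₁ (y + a)) ≤ 1)
    (hg₂b : ∀ y : ℝ, ∫⁻ a in Set.Ici (0:ℝ), ENNReal.ofReal (g₂ (y + a)) ≤ 1)
    (hp₁m : Measurable p₁) (hp₁ : ∀ y, 0 ≤ p₁ y)
    (hp₁int : ∫ y in Set.Ici (0:ℝ), p₁ y = 1)
    (hp₂m : Measurable p₂) (hp₂ : ∀ y, 0 ≤ p₂ y)
    (hp₂int : ∫ y in Set.Ici (0:ℝ), p₂ y = 1) :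
    ∫⁻ x in Set.Ici (0:ℝ) ×ˢ Set.Ici (0:ℝ),
        ∫⁻ z₁ in Set.Ici x.1, ∫⁻ z₂ in Set.Ici x.2,
          ENNReal.ofReal (K (z₁, z₂) * p₁ (z₁ - x.1) * p₂ (z₂ - x.2))
      ≤ ENNReal.ofReal e := by
  have hQm : MeasurableSet (Set.Ici (0:ℝ) ×ˢ Set.Ici (0:ℝ)) :=
    measurableSet_Ici.prod measurableSet_Ici
  have hAm : Measurable fun a : ℝ => ∫⁻ y in Set.Ici (0:ℝ),
      ENNReal.ofReal (g₁ (y + a)) * ENNReal.ofReal (p₁ y) := by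
    apply Measurable.lintegral_prod_right (f := fun (a : ℝ) (y : ℝ) =>
      ENNReal.ofReal (g₁ (y + a)) * ENNReal.ofReal (p₁ y))
    apply Measurable.fun_mul
    · exact ENNReal.measurable_ofReal.comp (hg₁m.comp (by fun_prop))
    · exact ENNReal.measurable_ofReal.comp (hp₁m.comp (by fun_prop))
  have hBm : Measurable fun b : ℝ => ∫⁻ y in Set.Ici (0:ℝ),
      ENNReal.ofReal (g₂ (y + b)) * ENNReal.ofReal (p₂ y) := by
    apply Measurable.lintegral_prod_right (f := fun (b : ℝ) (y : ℝ) =>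
      ENNReal.ofReal (g₂ (y + b)) * ENNReal.ofReal (p₂ y))
    apply Measurable.fun_mul
    · exact ENNReal.measurable_ofReal.comp (hg₂m.comp (by fun_prop))
    · exact ENNReal.measurable_ofReal.comp (hp₂m.comp (by fun_prop))
  have step : ∀ x ∈ Set.Ici (0:ℝ) ×ˢ Set.Ici (0:ℝ),
      (∫⁻ z₁ in Set.Ici x.1, ∫⁻ z₂ in Set.Ici x.2,
          ENNReal.ofReal (K (z₁, z₂) * p₁ (z₁ - x.1) * p₂ (z₂ - x.2)))
        ≤ ENNReal.ofReal e
            * (∫⁻ y in Set.Ici (0:ℝ), ENNReal.ofReal (g₁ (y + x.1)) * ENNReal.ofReal (p₁ y))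
            * (∫⁻ y in Set.Ici (0:ℝ), ENNReal.ofReal (g₂ (y + x.2)) * ENNReal.ofReal (p₂ y)) := by
    intro x hx
    have hx1 : (0:ℝ) ≤ x.1 := hx.1
    have hx2 : (0:ℝ) ≤ x.2 := hx.2
    rw [lintegral_Ici_shift (fun z₁ => ∫⁻ z₂ in Set.Ici x.2,
        ENNReal.ofReal (K (z₁, z₂) * p₁ (z₁ - x.1) * p₂ (z₂ - x.2)))
      (by
        apply Measurable.lintegral_prod_right (f := fun (z₁ : ℝ) (z₂ : ℝ) =>
          ENNReal.ofReal (K (z₁, z₂) * p₁ (z₁ - x.1) * p₂ (z₂ - x.2)))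
        fun_prop) x.1]
    have hinner : ∀ y₁ ∈ Set.Ici (0:ℝ),
        (∫⁻ z₂ in Set.Ici x.2,
            ENNReal.ofReal (K (y₁ + x.1, z₂) * p₁ (y₁ + x.1 - x.1) * p₂ (z₂ - x.2)))
          ≤ (ENNReal.ofReal e * (ENNReal.ofReal (g₁ (y₁ + x.1)) * ENNReal.ofReal (p₁ y₁)))
            * (∫⁻ y in Set.Ici (0:ℝ), ENNReal.ofReal (g₂ (y + x.2)) * ENNReal.ofReal (p₂ y)) := by
      intro y₁ hy₁
      have hy₁0 : (0:ℝ) ≤ y₁ := hy₁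
      rw [lintegral_Ici_shift (fun z₂ =>
          ENNReal.ofReal (K (y₁ + x.1, z₂) * p₁ (y₁ + x.1 - x.1) * p₂ (z₂ - x.2)))
        (by fun_prop) x.2]
      have hb : ∀ y₂ ∈ Set.Ici (0:ℝ),
          ENNReal.ofReal (K (y₁ + x.1, y₂ + x.2) * p₁ (y₁ + x.1 - x.1) * p₂ (y₂ + x.2 - x.2))
            ≤ (ENNReal.ofReal e * (ENNReal.ofReal (g₁ (y₁ + x.1)) * ENNReal.ofReal (p₁ y₁)))
              * (ENNReal.ofReal (g₂ (y₂ + x.2)) * ENNReal.ofReal (p₂ y₂)) := by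
        intro y₂ hy₂
        have hy₂0 : (0:ℝ) ≤ y₂ := hy₂
        have h1 : K (y₁ + x.1, y₂ + x.2) * p₁ (y₁ + x.1 - x.1) * p₂ (y₂ + x.2 - x.2)
            ≤ (e * g₁ (y₁ + x.1) * g₂ (y₂ + x.2)) * p₁ y₁ * p₂ y₂ := by
          rw [add_sub_cancel_right, add_sub_cancel_right]
          apply mul_le_mul_of_nonneg_right _ (hp₂ y₂)
          exact mul_le_mul_of_nonneg_right
            (hKle (y₁ + x.1, y₂ + x.2) (by show (0:ℝ) ≤ y₁ + x.1; linarith)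
              (by show (0:ℝ) ≤ y₂ + x.2; linarith)) (hp₁ y₁)
        calc ENNReal.ofReal (K (y₁ + x.1, y₂ + x.2) * p₁ (y₁ + x.1 - x.1) * p₂ (y₂ + x.2 - x.2))
            ≤ ENNReal.ofReal ((e * g₁ (y₁ + x.1) * g₂ (y₂ + x.2)) * p₁ y₁ * p₂ y₂) :=
              ENNReal.ofReal_le_ofReal h1
          _ = (ENNReal.ofReal e * (ENNReal.ofReal (g₁ (y₁ + x.1)) * ENNReal.ofReal (p₁ y₁)))
              * (ENNReal.ofReal (g₂ (y₂ + x.2)) * ENNReal.ofReal (p₂ y₂)) := by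
              rw [ENNReal.ofReal_mul
                  (mul_nonneg (mul_nonneg (mul_nonneg he (hg₁nn _)) (hg₂nn _)) (hp₁ y₁)),
                ENNReal.ofReal_mul (mul_nonneg (mul_nonneg he (hg₁nn _)) (hg₂nn _)),
                ENNReal.ofReal_mul (mul_nonneg he (hg₁nn _)), ENNReal.ofReal_mul he]
              ring
      calc (∫⁻ y₂ in Set.Ici (0:ℝ),
            ENNReal.ofReal (K (y₁ + x.1, y₂ + x.2) * p₁ (y₁ + x.1 - x.1) * p₂ (y₂ + x.2 - x.2)))
          ≤ ∫⁻ y₂ in Set.Ici (0:ℝ),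
              (ENNReal.ofReal e * (ENNReal.ofReal (g₁ (y₁ + x.1)) * ENNReal.ofReal (p₁ y₁)))
              * (ENNReal.ofReal (g₂ (y₂ + x.2)) * ENNReal.ofReal (p₂ y₂)) := by
            apply lintegral_mono_ae
            filter_upwards [ae_restrict_mem measurableSet_Ici] with y₂ hy₂ using hb y₂ hy₂
        _ = (ENNReal.ofReal e * (ENNReal.ofReal (g₁ (y₁ + x.1)) * ENNReal.ofReal (p₁ y₁)))
            * (∫⁻ y in Set.Ici (0:ℝ), ENNReal.ofReal (g₂ (y + x.2)) * ENNReal.ofReal (p₂ y)) := by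
            rw [lintegral_const_mul]
            apply Measurable.fun_mul
            · exact ENNReal.measurable_ofReal.comp (hg₂m.comp (by fun_prop))
            · exact ENNReal.measurable_ofReal.comp (hp₂m.comp (by fun_prop))
    calc (∫⁻ y₁ in Set.Ici (0:ℝ), ∫⁻ z₂ in Set.Ici x.2,
          ENNReal.ofReal (K (y₁ + x.1, z₂) * p₁ (y₁ + x.1 - x.1) * p₂ (z₂ - x.2)))
        ≤ ∫⁻ y₁ in Set.Ici (0:ℝ),
            (ENNReal.ofReal e * (ENNReal.ofReal (g₁ (y₁ + x.1)) * ENNReal.ofReal (p₁ y₁)))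
            * (∫⁻ y in Set.Ici (0:ℝ), ENNReal.ofReal (g₂ (y + x.2)) * ENNReal.ofReal (p₂ y)) := by
          apply lintegral_mono_ae
          filter_upwards [ae_restrict_mem measurableSet_Ici] with y₁ hy₁ using hinner y₁ hy₁
      _ = ENNReal.ofReal e
            * (∫⁻ y in Set.Ici (0:ℝ), ENNReal.ofReal (g₁ (y + x.1)) * ENNReal.ofReal (p₁ y))
            * (∫⁻ y in Set.Ici (0:ℝ), ENNReal.ofReal (g₂ (y + x.2)) * ENNReal.ofReal (p₂ y)) := by
          have hm1 : Measurable fun a : ℝ =>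
              ENNReal.ofReal (g₁ (a + x.1)) * ENNReal.ofReal (p₁ a) := by
            apply Measurable.fun_mul
            · exact ENNReal.measurable_ofReal.comp (hg₁m.comp (by fun_prop))
            · exact ENNReal.measurable_ofReal.comp (hp₁m.comp (by fun_prop))
          rw [lintegral_mul_const _ (hm1.const_mul _), lintegral_const_mul _ hm1]
  calc ∫⁻ x in Set.Ici (0:ℝ) ×ˢ Set.Ici (0:ℝ),
        ∫⁻ z₁ in Set.Ici x.1, ∫⁻ z₂ in Set.Ici x.2,
          ENNReal.ofReal (K (z₁, z₂) * p₁ (z₁ - x.1) * p₂ (z₂ - x.2))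
      ≤ ∫⁻ x in Set.Ici (0:ℝ) ×ˢ Set.Ici (0:ℝ), ENNReal.ofReal e
          * (∫⁻ y in Set.Ici (0:ℝ), ENNReal.ofReal (g₁ (y + x.1)) * ENNReal.ofReal (p₁ y))
          * (∫⁻ y in Set.Ici (0:ℝ), ENNReal.ofReal (g₂ (y + x.2)) * ENNReal.ofReal (p₂ y)) := by
        apply lintegral_mono_ae
        filter_upwards [ae_restrict_mem hQm] with x hx using step x hx
    _ ≤ ENNReal.ofReal e := by
        apply prod_quadrant_bound _ _ hAm hBm
          (conv_bound_gen g₁ hg₁m hg₁b p₁ hp₁m hp₁ hp₁int)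
          (conv_bound_gen g₂ hg₂m hg₂b p₂ hp₂m hp₂ hp₂int)


lemma G_pointwise (hKm : Measurable K)
    (hKnn : ∀ z : ℝ × ℝ, 0 ≤ z.1 → 0 ≤ z.2 → 0 ≤ K z)
    (l₁ l₂ l₃ : ℝ) (hl₁ : 0 ≤ l₁) (hl₂ : 0 ≤ l₂) (hl₃ : 0 ≤ l₃)
    (hp₁m : Measurable p₁) (hp₂m : Measurable p₂)
    (hp₁ : ∀ y, 0 ≤ p₁ y) (hp₂ : ∀ y, 0 ≤ p₂ y)
    (x : ℝ × ℝ) (hx1 : 0 ≤ x.1) (hx2 : 0 ≤ x.2) :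
    ENNReal.ofReal |(-l₁ * (∫ z in Set.Ici x.1, K (z, x.2) * p₁ (z - x.1))
        - l₂ * (∫ z in Set.Ici x.2, K (x.1, z) * p₂ (z - x.2))
        - l₃ * (∫ z₁ in Set.Ici x.1, ∫ z₂ in Set.Ici x.2,
            K (z₁, z₂) * p₁ (z₁ - x.1) * p₂ (z₂ - x.2)))|
      ≤ ENNReal.ofReal l₁
            * (∫⁻ z in Set.Ici x.1, ENNReal.ofReal (K (z, x.2) * p₁ (z - x.1)))
        + ENNReal.ofReal l₂
            * (∫⁻ z in Set.Ici x.2, ENNReal.ofReal (K (x.1, z) * p₂ (z - x.2)))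
        + ENNReal.ofReal l₃
            * (∫⁻ z₁ in Set.Ici x.1, ∫⁻ z₂ in Set.Ici x.2,
                ENNReal.ofReal (K (z₁, z₂) * p₁ (z₁ - x.1) * p₂ (z₂ - x.2))) := by
  have hnn1 : ∀ z ∈ Set.Ici x.1, 0 ≤ K (z, x.2) * p₁ (z - x.1) := fun z hz =>
    mul_nonneg (hKnn (z, x.2) (le_trans hx1 (Set.mem_Ici.1 hz)) hx2) (hp₁ _)
  have hnn2 : ∀ z ∈ Set.Ici x.2, 0 ≤ K (x.1, z) * p₂ (z - x.2) := fun z hz =>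
    mul_nonneg (hKnn (x.1, z) hx1 (le_trans hx2 (Set.mem_Ici.1 hz))) (hp₂ _)
  have hnn3 : ∀ z₁ ∈ Set.Ici x.1, ∀ z₂ ∈ Set.Ici x.2,
      0 ≤ K (z₁, z₂) * p₁ (z₁ - x.1) * p₂ (z₂ - x.2) := fun z₁ hz₁ z₂ hz₂ =>
    mul_nonneg (mul_nonneg (hKnn (z₁, z₂) (le_trans hx1 (Set.mem_Ici.1 hz₁))
      (le_trans hx2 (Set.mem_Ici.1 hz₂))) (hp₁ _)) (hp₂ _)
  set T₁ := ∫ z in Set.Ici x.1, K (z, x.2) * p₁ (z - x.1) with hT₁def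
  set T₂ := ∫ z in Set.Ici x.2, K (x.1, z) * p₂ (z - x.2) with hT₂def
  set T₃ := ∫ z₁ in Set.Ici x.1, ∫ z₂ in Set.Ici x.2,
      K (z₁, z₂) * p₁ (z₁ - x.1) * p₂ (z₂ - x.2) with hT₃def
  have hT₁nn : 0 ≤ T₁ := setIntegral_nonneg measurableSet_Ici hnn1
  have hT₂nn : 0 ≤ T₂ := setIntegral_nonneg measurableSet_Ici hnn2
  have hI : ∀ z₁ ∈ Set.Ici x.1,
      0 ≤ ∫ z₂ in Set.Ici x.2, K (z₁, z₂) * p₁ (z₁ - x.1) * p₂ (z₂ - x.2) := fun z₁ hz₁ =>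
    setIntegral_nonneg measurableSet_Ici (hnn3 z₁ hz₁)
  have hT₃nn : 0 ≤ T₃ := setIntegral_nonneg measurableSet_Ici hI
  have h1 : ENNReal.ofReal T₁
      ≤ ∫⁻ z in Set.Ici x.1, ENNReal.ofReal (K (z, x.2) * p₁ (z - x.1)) := by
    rw [hT₁def, integral_eq_lintegral_of_nonneg_ae
      (by filter_upwards [ae_restrict_mem measurableSet_Ici] with z hz using hnn1 z hz)
      (Measurable.aestronglyMeasurable (by fun_prop))]
    exact ENNReal.ofReal_toReal_le
  have h2 : ENNReal.ofReal T₂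
      ≤ ∫⁻ z in Set.Ici x.2, ENNReal.ofReal (K (x.1, z) * p₂ (z - x.2)) := by
    rw [hT₂def, integral_eq_lintegral_of_nonneg_ae
      (by filter_upwards [ae_restrict_mem measurableSet_Ici] with z hz using hnn2 z hz)
      (Measurable.aestronglyMeasurable (by fun_prop))]
    exact ENNReal.ofReal_toReal_le
  have hIm : StronglyMeasurable fun z₁ =>
      ∫ z₂ in Set.Ici x.2, K (z₁, z₂) * p₁ (z₁ - x.1) * p₂ (z₂ - x.2) := by
    apply MeasureTheory.StronglyMeasurable.integral_prod_right
      (f := fun z₁ z₂ => K (z₁, z₂) * p₁ (z₁ - x.1) * p₂ (z₂ - x.2))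
    apply Measurable.stronglyMeasurable
    apply Measurable.mul
    apply Measurable.mul
    · exact hKm.comp (by fun_prop)
    · exact hp₁m.comp (by fun_prop)
    · exact hp₂m.comp (by fun_prop)
  have h3 : ENNReal.ofReal T₃
      ≤ ∫⁻ z₁ in Set.Ici x.1, ∫⁻ z₂ in Set.Ici x.2,
          ENNReal.ofReal (K (z₁, z₂) * p₁ (z₁ - x.1) * p₂ (z₂ - x.2)) := by
    rw [hT₃def, integral_eq_lintegral_of_nonneg_ae
      (by filter_upwards [ae_restrict_mem measurableSet_Ici] with z₁ hz₁ using hI z₁ hz₁)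
      hIm.aestronglyMeasurable]
    refine le_trans ENNReal.ofReal_toReal_le (lintegral_mono_ae ?_)
    filter_upwards [ae_restrict_mem measurableSet_Ici] with z₁ hz₁
    rw [integral_eq_lintegral_of_nonneg_ae
      (by filter_upwards [ae_restrict_mem measurableSet_Ici] with z₂ hz₂ using hnn3 z₁ hz₁ z₂ hz₂)
      (Measurable.aestronglyMeasurable (by fun_prop))]
    exact ENNReal.ofReal_toReal_le
  have habs : |(-l₁ * T₁ - l₂ * T₂ - l₃ * T₃)| = l₁ * T₁ + l₂ * T₂ + l₃ * T₃ := by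
    rw [show -l₁ * T₁ - l₂ * T₂ - l₃ * T₃ = -(l₁ * T₁ + l₂ * T₂ + l₃ * T₃) by ring, abs_neg,
      abs_of_nonneg (by
        have := mul_nonneg hl₁ hT₁nn
        have := mul_nonneg hl₂ hT₂nn
        have := mul_nonneg hl₃ hT₃nn
        linarith)]
  rw [habs, ENNReal.ofReal_add (by
        have := mul_nonneg hl₁ hT₁nn
        have := mul_nonneg hl₂ hT₂nn
        linarith) (mul_nonneg hl₃ hT₃nn),
    ENNReal.ofReal_add (mul_nonneg hl₁ hT₁nn) (mul_nonneg hl₂ hT₂nn),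
    ENNReal.ofReal_mul hl₁, ENNReal.ofReal_mul hl₂, ENNReal.ofReal_mul hl₃]
  gcongr

lemma Gbound_general (hKm : Measurable K) (he : 0 ≤ e)
    (hg₁m : Measurable g₁) (hg₂m : Measurable g₂)
    (hg₁nn : ∀ z, 0 ≤ g₁ z) (hg₂nn : ∀ z, 0 ≤ g₂ z)
    (hKnn : ∀ z : ℝ × ℝ, 0 ≤ z.1 → 0 ≤ z.2 → 0 ≤ K z)
    (hKle : ∀ z : ℝ × ℝ, 0 ≤ z.1 → 0 ≤ z.2 → K z ≤ e * g₁ z.1 * g₂ z.2)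
    (hg₁b : ∀ y : ℝ, ∫⁻ a in Set.Ici (0:ℝ), ENNReal.ofReal (g₁ (y + a)) ≤ 1)
    (hg₂b : ∀ y : ℝ, ∫⁻ a in Set.Ici (0:ℝ), ENNReal.ofReal (g₂ (y + a)) ≤ 1)
    (l₁ l₂ l₃ : ℝ) (hl₁ : 0 ≤ l₁) (hl₂ : 0 ≤ l₂) (hl₃ : 0 ≤ l₃)
    (hp₁m : Measurable p₁) (hp₂m : Measurable p₂)
    (hp₁ : ∀ y, 0 ≤ p₁ y) (hp₂ : ∀ y, 0 ≤ p₂ y)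
    (hp₁int : ∫ y in Set.Ici (0:ℝ), p₁ y = 1) (hp₂int : ∫ y in Set.Ici (0:ℝ), p₂ y = 1) :
    ∫⁻ x in Set.Ici (0:ℝ) ×ˢ Set.Ici (0:ℝ), ENNReal.ofReal
        |(-l₁ * (∫ z in Set.Ici x.1, K (z, x.2) * p₁ (z - x.1))
          - l₂ * (∫ z in Set.Ici x.2, K (x.1, z) * p₂ (z - x.2))
          - l₃ * (∫ z₁ in Set.Ici x.1, ∫ z₂ in Set.Ici x.2,
              K (z₁, z₂) * p₁ (z₁ - x.1) * p₂ (z₂ - x.2)))|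
      ≤ ENNReal.ofReal ((l₁ + l₂ + l₃) * e) := by
  have hQm : MeasurableSet (Set.Ici (0:ℝ) ×ˢ Set.Ici (0:ℝ)) :=
    measurableSet_Ici.prod measurableSet_Ici
  have hL1m := meas_L1 K p₁ hKm hp₁m
  have hL2m := meas_L2 K p₂ hKm hp₂m
  have hL3m := meas_L3 K p₁ p₂ hKm hp₁m hp₂m
  calc ∫⁻ x in Set.Ici (0:ℝ) ×ˢ Set.Ici (0:ℝ), ENNReal.ofReal
        |(-l₁ * (∫ z in Set.Ici x.1, K (z, x.2) * p₁ (z - x.1))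
          - l₂ * (∫ z in Set.Ici x.2, K (x.1, z) * p₂ (z - x.2))
          - l₃ * (∫ z₁ in Set.Ici x.1, ∫ z₂ in Set.Ici x.2,
              K (z₁, z₂) * p₁ (z₁ - x.1) * p₂ (z₂ - x.2)))|
      ≤ ∫⁻ x in Set.Ici (0:ℝ) ×ˢ Set.Ici (0:ℝ),
          (ENNReal.ofReal l₁
            * (∫⁻ z in Set.Ici x.1, ENNReal.ofReal (K (z, x.2) * p₁ (z - x.1)))
          + ENNReal.ofReal l₂
            * (∫⁻ z in Set.Ici x.2, ENNReal.ofReal (K (x.1, z) * p₂ (z - x.2)))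
          + ENNReal.ofReal l₃
            * (∫⁻ z₁ in Set.Ici x.1, ∫⁻ z₂ in Set.Ici x.2,
                ENNReal.ofReal (K (z₁, z₂) * p₁ (z₁ - x.1) * p₂ (z₂ - x.2)))) := by
        apply lintegral_mono_ae
        filter_upwards [ae_restrict_mem hQm] with x hx using
          G_pointwise K p₁ p₂ hKm hKnn l₁ l₂ l₃ hl₁ hl₂ hl₃ hp₁m hp₂m hp₁ hp₂ x hx.1 hx.2
    _ = (ENNReal.ofReal l₁ * ∫⁻ x in Set.Ici (0:ℝ) ×ˢ Set.Ici (0:ℝ),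
            (∫⁻ z in Set.Ici x.1, ENNReal.ofReal (K (z, x.2) * p₁ (z - x.1))))
        + (ENNReal.ofReal l₂ * ∫⁻ x in Set.Ici (0:ℝ) ×ˢ Set.Ici (0:ℝ),
            (∫⁻ z in Set.Ici x.2, ENNReal.ofReal (K (x.1, z) * p₂ (z - x.2))))
        + (ENNReal.ofReal l₃ * ∫⁻ x in Set.Ici (0:ℝ) ×ˢ Set.Ici (0:ℝ),
            (∫⁻ z₁ in Set.Ici x.1, ∫⁻ z₂ in Set.Ici x.2,
                ENNReal.ofReal (K (z₁, z₂) * p₁ (z₁ - x.1) * p₂ (z₂ - x.2)))) := by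
        rw [lintegral_add_left ((hL1m.const_mul _).fun_add (hL2m.const_mul _)),
          lintegral_add_left (hL1m.const_mul _),
          lintegral_const_mul _ hL1m, lintegral_const_mul _ hL2m, lintegral_const_mul _ hL3m]
    _ ≤ ENNReal.ofReal l₁ * ENNReal.ofReal e + ENNReal.ofReal l₂ * ENNReal.ofReal e
        + ENNReal.ofReal l₃ * ENNReal.ofReal e := by
        gcongr
        · exact L1_bound K e g₁ g₂ p₁ hKm he hg₁m hg₂m hg₁nn hg₂nn hKle hg₁b hg₂b hp₁m hp₁ hp₁int
        · exact L2_bound K e g₁ g₂ p₂ hKm he hg₁m hg₂m hg₁nn hg₂nn hKle hg₁b hg₂b hp₂m hp₂ hp₂int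
        · exact L3_bound K e g₁ g₂ p₁ p₂ hKm he hg₁m hg₂m hg₁nn hg₂nn hKle hg₁b hg₂b
            hp₁m hp₁ hp₁int hp₂m hp₂ hp₂int
    _ = ENNReal.ofReal ((l₁ + l₂ + l₃) * e) := by
        rw [ENNReal.ofReal_mul (by linarith), ENNReal.ofReal_add (by linarith) hl₃,
          ENNReal.ofReal_add hl₁ hl₂]
        ring

end GB

/-- The kernel `G(t,x;τ,ξ)` of the Volterra integral equation, built from `K` and the claim
densities `p₁`, `p₂` with rates `λ₁, λ₂, λ₃` (total rate `λ = λ₁ + λ₂ + λ₃`). -/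
noncomputable def Gker (C₁ C₂ σ₁ σ₂ l₁ l₂ l₃ : ℝ) (p₁ p₂ : ℝ → ℝ)
    (t : ℝ) (x : ℝ × ℝ) (τ : ℝ) (ξ : ℝ × ℝ) : ℝ :=
  -l₁ * (∫ z₁ in Set.Ici x.1, Kker C₁ C₂ σ₁ σ₂ (l₁ + l₂ + l₃) t (z₁, x.2) τ ξ * p₁ (z₁ - x.1))
    - l₂ * (∫ z₂ in Set.Ici x.2, Kker C₁ C₂ σ₁ σ₂ (l₁ + l₂ + l₃) t (x.1, z₂) τ ξ * p₂ (z₂ - x.2))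
    - l₃ * (∫ z₁ in Set.Ici x.1, ∫ z₂ in Set.Ici x.2,
        Kker C₁ C₂ σ₁ σ₂ (l₁ + l₂ + l₃) t (z₁, z₂) τ ξ * p₁ (z₁ - x.1) * p₂ (z₂ - x.2))

section Gker

variable (C₁ C₂ σ₁ σ₂ l₁ l₂ l₃ : ℝ) (p₁ p₂ : ℝ → ℝ) (t τ : ℝ) (ξ : ℝ × ℝ)

lemma Gker_meas (hp₁m : Measurable p₁) (hp₂m : Measurable p₂) :
    Measurable fun x : ℝ × ℝ => Gker C₁ C₂ σ₁ σ₂ l₁ l₂ l₃ p₁ p₂ t x τ ξ := by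
  unfold Gker
  have hK := Kker_meas C₁ C₂ σ₁ σ₂ (l₁ + l₂ + l₃) t τ ξ
  apply Measurable.sub
  apply Measurable.sub
  · exact (meas_T1 (fun z : ℝ × ℝ => Kker C₁ C₂ σ₁ σ₂ (l₁ + l₂ + l₃) t z τ ξ) p₁
      hK hp₁m).const_mul (-l₁)
  · exact (meas_T2 (fun z : ℝ × ℝ => Kker C₁ C₂ σ₁ σ₂ (l₁ + l₂ + l₃) t z τ ξ) p₂
      hK hp₂m).const_mul l₂
  · exact (meas_T3 (fun z : ℝ × ℝ => Kker C₁ C₂ σ₁ σ₂ (l₁ + l₂ + l₃) t z τ ξ) p₁ p₂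
      hK hp₁m hp₂m).const_mul l₃

lemma Gker_lintegral_bound (hσ₁ : 0 < σ₁) (hσ₂ : 0 < σ₂)
    (hl₁ : 0 ≤ l₁) (hl₂ : 0 ≤ l₂) (hl₃ : 0 ≤ l₃)
    (hp₁m : Measurable p₁) (hp₂m : Measurable p₂)
    (hp₁ : ∀ y, 0 ≤ p₁ y) (hp₂ : ∀ y, 0 ≤ p₂ y)
    (hp₁int : ∫ y in Set.Ici (0:ℝ), p₁ y = 1) (hp₂int : ∫ y in Set.Ici (0:ℝ), p₂ y = 1)
    (hτt : τ < t) (hξ₁ : 0 ≤ ξ.1) (hξ₂ : 0 ≤ ξ.2) :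
    ∫⁻ x in Set.Ici (0:ℝ) ×ˢ Set.Ici (0:ℝ),
        ENNReal.ofReal |Gker C₁ C₂ σ₁ σ₂ l₁ l₂ l₃ p₁ p₂ t x τ ξ|
      ≤ ENNReal.ofReal ((l₁ + l₂ + l₃) * Real.exp (-(l₁ + l₂ + l₃) * (t - τ))) := by
  have hs : 0 < t - τ := by linarith
  have hv₁ : 0 < σ₁ ^ 2 * (t - τ) := mul_pos (pow_pos hσ₁ 2) hs
  have hv₂ : 0 < σ₂ ^ 2 * (t - τ) := mul_pos (pow_pos hσ₂ 2) hs
  have hKnn : ∀ z : ℝ × ℝ, 0 ≤ z.1 → 0 ≤ z.2 →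
      0 ≤ Kker C₁ C₂ σ₁ σ₂ (l₁ + l₂ + l₃) t z τ ξ := by
    intro z hz1 hz2
    show 0 ≤ Kker C₁ C₂ σ₁ σ₂ (l₁ + l₂ + l₃) t (z.1, z.2) τ ξ
    rw [Kfact]
    exact mul_nonneg (mul_nonneg (Real.exp_nonneg _) (Kfac_nonneg C₁ hσ₁ hs hξ₁ hz1))
      (Kfac_nonneg C₂ hσ₂ hs hξ₂ hz2)
  have hKle : ∀ z : ℝ × ℝ, 0 ≤ z.1 → 0 ≤ z.2 →
      Kker C₁ C₂ σ₁ σ₂ (l₁ + l₂ + l₃) t z τ ξ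
        ≤ Real.exp (-(l₁ + l₂ + l₃) * (t - τ))
          * gauss (σ₁ ^ 2 * (t - τ)) (ξ.1 + C₁ * (t - τ)) z.1
          * gauss (σ₂ ^ 2 * (t - τ)) (ξ.2 + C₂ * (t - τ)) z.2 := by
    intro z hz1 hz2
    show Kker C₁ C₂ σ₁ σ₂ (l₁ + l₂ + l₃) t (z.1, z.2) τ ξ ≤ _
    rw [Kfact]
    apply mul_le_mul
      (mul_le_mul_of_nonneg_left (Kfac_le C₁ hσ₁ hs ξ.1 z.1) (Real.exp_nonneg _))
      (Kfac_le C₂ hσ₂ hs ξ.2 z.2) (Kfac_nonneg C₂ hσ₂ hs hξ₂ hz2)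
      (mul_nonneg (Real.exp_nonneg _) (gauss_nonneg _ _ _))
  have hg₁b : ∀ y : ℝ, ∫⁻ a in Set.Ici (0:ℝ),
      ENNReal.ofReal (gauss (σ₁ ^ 2 * (t - τ)) (ξ.1 + C₁ * (t - τ)) (y + a)) ≤ 1 := by
    intro y
    have h : ∀ a : ℝ, gauss (σ₁ ^ 2 * (t - τ)) (ξ.1 + C₁ * (t - τ)) (y + a)
        = gauss (σ₁ ^ 2 * (t - τ)) (ξ.1 + C₁ * (t - τ) - y) a := fun a => by
      rw [add_comm y a, gauss_shift]
    simp only [h]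
    exact lintegral_gauss_le hv₁ _ _
  have hg₂b : ∀ y : ℝ, ∫⁻ a in Set.Ici (0:ℝ),
      ENNReal.ofReal (gauss (σ₂ ^ 2 * (t - τ)) (ξ.2 + C₂ * (t - τ)) (y + a)) ≤ 1 := by
    intro y
    have h : ∀ a : ℝ, gauss (σ₂ ^ 2 * (t - τ)) (ξ.2 + C₂ * (t - τ)) (y + a)
        = gauss (σ₂ ^ 2 * (t - τ)) (ξ.2 + C₂ * (t - τ) - y) a := fun a => by
      rw [add_comm y a, gauss_shift]
    simp only [h]
    exact lintegral_gauss_le hv₂ _ _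
  have key := Gbound_general (fun z : ℝ × ℝ => Kker C₁ C₂ σ₁ σ₂ (l₁ + l₂ + l₃) t z τ ξ)
    (Real.exp (-(l₁ + l₂ + l₃) * (t - τ)))
    (gauss (σ₁ ^ 2 * (t - τ)) (ξ.1 + C₁ * (t - τ)))
    (gauss (σ₂ ^ 2 * (t - τ)) (ξ.2 + C₂ * (t - τ))) p₁ p₂
    (Kker_meas C₁ C₂ σ₁ σ₂ (l₁ + l₂ + l₃) t τ ξ) (Real.exp_nonneg _)
    (gauss_meas _ _) (gauss_meas _ _) (gauss_nonneg _ _) (gauss_nonneg _ _)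
    hKnn hKle hg₁b hg₂b l₁ l₂ l₃ hl₁ hl₂ hl₃ hp₁m hp₂m hp₁ hp₂ hp₁int hp₂int
  exact le_trans (le_of_eq (by rfl)) key

lemma Gker_abs_integral_bound (hσ₁ : 0 < σ₁) (hσ₂ : 0 < σ₂)
    (hl₁ : 0 ≤ l₁) (hl₂ : 0 ≤ l₂) (hl₃ : 0 ≤ l₃)
    (hp₁m : Measurable p₁) (hp₂m : Measurable p₂)
    (hp₁ : ∀ y, 0 ≤ p₁ y) (hp₂ : ∀ y, 0 ≤ p₂ y)
    (hp₁int : ∫ y in Set.Ici (0:ℝ), p₁ y = 1) (hp₂int : ∫ y in Set.Ici (0:ℝ), p₂ y = 1)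
    (hτt : τ < t) (hξ₁ : 0 ≤ ξ.1) (hξ₂ : 0 ≤ ξ.2) :
    (∫ x in Set.Ici (0:ℝ) ×ˢ Set.Ici (0:ℝ), |Gker C₁ C₂ σ₁ σ₂ l₁ l₂ l₃ p₁ p₂ t x τ ξ|)
      ≤ (l₁ + l₂ + l₃) * Real.exp (-(l₁ + l₂ + l₃) * (t - τ)) := by
  have hGm := Gker_meas C₁ C₂ σ₁ σ₂ l₁ l₂ l₃ p₁ p₂ t τ ξ hp₁m hp₂m
  rw [integral_eq_lintegral_of_nonneg_ae
    (Filter.Eventually.of_forall fun x => abs_nonneg _) hGm.abs.aestronglyMeasurable]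
  exact ENNReal.toReal_le_of_le_ofReal
    (mul_nonneg (by linarith) (Real.exp_nonneg _))
    (Gker_lintegral_bound C₁ C₂ σ₁ σ₂ l₁ l₂ l₃ p₁ p₂ t τ ξ hσ₁ hσ₂ hl₁ hl₂ hl₃
      hp₁m hp₂m hp₁ hp₂ hp₁int hp₂int hτt hξ₁ hξ₂)

lemma Gker_integrable (hσ₁ : 0 < σ₁) (hσ₂ : 0 < σ₂)
    (hl₁ : 0 ≤ l₁) (hl₂ : 0 ≤ l₂) (hl₃ : 0 ≤ l₃)
    (hp₁m : Measurable p₁) (hp₂m : Measurable p₂)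
    (hp₁ : ∀ y, 0 ≤ p₁ y) (hp₂ : ∀ y, 0 ≤ p₂ y)
    (hp₁int : ∫ y in Set.Ici (0:ℝ), p₁ y = 1) (hp₂int : ∫ y in Set.Ici (0:ℝ), p₂ y = 1)
    (hτt : τ < t) (hξ₁ : 0 ≤ ξ.1) (hξ₂ : 0 ≤ ξ.2) :
    Integrable (fun x => Gker C₁ C₂ σ₁ σ₂ l₁ l₂ l₃ p₁ p₂ t x τ ξ)
      (volume.restrict (Set.Ici (0:ℝ) ×ˢ Set.Ici (0:ℝ))) := by
  constructor
  · exact (Gker_meas C₁ C₂ σ₁ σ₂ l₁ l₂ l₃ p₁ p₂ t τ ξ hp₁m hp₂m).aestronglyMeasurable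
  · rw [hasFiniteIntegral_iff_norm]
    calc ∫⁻ x in Set.Ici (0:ℝ) ×ˢ Set.Ici (0:ℝ),
          ENNReal.ofReal ‖Gker C₁ C₂ σ₁ σ₂ l₁ l₂ l₃ p₁ p₂ t x τ ξ‖
        = ∫⁻ x in Set.Ici (0:ℝ) ×ˢ Set.Ici (0:ℝ),
          ENNReal.ofReal |Gker C₁ C₂ σ₁ σ₂ l₁ l₂ l₃ p₁ p₂ t x τ ξ| := by
          simp [Real.norm_eq_abs]
      _ ≤ ENNReal.ofReal ((l₁ + l₂ + l₃) * Real.exp (-(l₁ + l₂ + l₃) * (t - τ))) :=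
          Gker_lintegral_bound C₁ C₂ σ₁ σ₂ l₁ l₂ l₃ p₁ p₂ t τ ξ hσ₁ hσ₂ hl₁ hl₂ hl₃
            hp₁m hp₂m hp₁ hp₂ hp₁int hp₂int hτt hξ₁ hξ₂
      _ < ⊤ := ENNReal.ofReal_lt_top

end Gker

/-- The inhomogeneous term `F(τ,ξ) = ∫_{[0,∞)²} K(T,x;τ,ξ) dx` of the integral equation. -/
noncomputable def Fker (C₁ C₂ σ₁ σ₂ lam T : ℝ) (τ : ℝ) (ξ : ℝ × ℝ) : ℝ :=
  ∫ x in Set.Ici (0 : ℝ) ×ˢ Set.Ici (0 : ℝ), Kker C₁ C₂ σ₁ σ₂ lam T x τ ξ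

/-- The Volterra integral operator
`(𝒯Ψ)(τ,ξ) = ∫_τ^T ∫_{[0,∞)²} G(t,x;τ,ξ) Ψ(t,x) dx dt`. -/
noncomputable def neumannOp (C₁ C₂ σ₁ σ₂ l₁ l₂ l₃ T : ℝ) (p₁ p₂ : ℝ → ℝ)
    (Ψ : ℝ → ℝ × ℝ → ℝ) : ℝ → ℝ × ℝ → ℝ :=
  fun τ ξ => ∫ t in Set.Ioc τ T, ∫ x in Set.Ici (0 : ℝ) ×ˢ Set.Ici (0 : ℝ),
    Gker C₁ C₂ σ₁ σ₂ l₁ l₂ l₃ p₁ p₂ t x τ ξ * Ψ t x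

section part2
variable (G : ℝ → ℝ × ℝ → ℝ → ℝ × ℝ → ℝ) (T τ₀ : ℝ)

noncomputable def nOp (Ψ : ℝ → ℝ × ℝ → ℝ) : ℝ → ℝ × ℝ → ℝ :=
  fun τ ξ => ∫ t in Set.Ioc τ T, ∫ x in Set.Ici (0 : ℝ) ×ˢ Set.Ici (0 : ℝ),
    G t x τ ξ * Ψ t x

lemma part2
    (lam : ℝ) (hlam : 0 ≤ lam)
    (hGb : ∀ τ t : ℝ, τ₀ ≤ τ → τ < t → t ≤ T → ∀ ξ ∈ Set.Ici (0:ℝ) ×ˢ Set.Ici (0:ℝ),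
      (∫ x in Set.Ici (0:ℝ) ×ˢ Set.Ici (0:ℝ), |G t x τ ξ|) ≤ lam * Real.exp (-lam * (t - τ)))
    (hGint : ∀ τ t : ℝ, τ₀ ≤ τ → τ < t → t ≤ T → ∀ ξ ∈ Set.Ici (0:ℝ) ×ˢ Set.Ici (0:ℝ),
      Integrable (fun x => G t x τ ξ) (volume.restrict (Set.Ici (0:ℝ) ×ˢ Set.Ici (0:ℝ))))
    (hτ₀T : τ₀ < T)
    (Ψ : ℝ → ℝ × ℝ → ℝ) (M : ℝ)
    (hM : ∀ τ ∈ Set.Icc τ₀ T, ∀ ξ ∈ Set.Ici (0:ℝ) ×ˢ Set.Ici (0:ℝ), |Ψ τ ξ| ≤ M) :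
    ∀ k : ℕ, ∀ τ ∈ Set.Icc τ₀ T, ∀ ξ ∈ Set.Ici (0:ℝ) ×ˢ Set.Ici (0:ℝ),
      |(nOp G T)^[k] Ψ τ ξ| ≤ lam ^ k * (T - τ) ^ k / (Nat.factorial k) * M := by
  have hQm : MeasurableSet (Set.Ici (0:ℝ) ×ˢ Set.Ici (0:ℝ)) :=
    measurableSet_Ici.prod measurableSet_Ici
  have hM0 : 0 ≤ M := le_trans (abs_nonneg _)
    (hM τ₀ ⟨le_refl _, le_of_lt hτ₀T⟩ (0, 0) (by constructor <;> simp))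
  intro k
  induction k with
  | zero => intro τ hτ ξ hξ; simpa using hM τ hτ ξ hξ
  | succ k ih =>
    intro τ hτ ξ hξ
    rw [Function.iterate_succ_apply']
    have hτT : τ ≤ T := hτ.2
    show |∫ t in Set.Ioc τ T, ∫ x in Set.Ici (0:ℝ) ×ˢ Set.Ici (0:ℝ),
        G t x τ ξ * (nOp G T)^[k] Ψ t x| ≤ _
    have hkfac : (0:ℝ) < (Nat.factorial k : ℝ) := by positivity
    -- pointwise bound on the inner integral
    have hinner : ∀ t ∈ Set.Ioc τ T,
        |∫ x in Set.Ici (0:ℝ) ×ˢ Set.Ici (0:ℝ), G t x τ ξ * (nOp G T)^[k] Ψ t x|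
          ≤ lam ^ (k + 1) * M / (Nat.factorial k) * (T - t) ^ k := by
      intro t ht
      have htI : t ∈ Set.Icc τ₀ T := ⟨le_trans hτ.1 ht.1.le, ht.2⟩
      have hGi := hGint τ t hτ.1 ht.1 ht.2 ξ hξ
      have hGB := hGb τ t hτ.1 ht.1 ht.2 ξ hξ
      set Bk : ℝ := lam ^ k * (T - t) ^ k / (Nat.factorial k) * M with hBkdef
      have hBk0 : 0 ≤ Bk := by
        apply mul_nonneg _ hM0
        apply div_nonneg _ (le_of_lt hkfac)
        exact mul_nonneg (pow_nonneg hlam _) (pow_nonneg (by linarith [ht.2]) _)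
      have habs : ∀ x ∈ Set.Ici (0:ℝ) ×ˢ Set.Ici (0:ℝ),
          |G t x τ ξ * (nOp G T)^[k] Ψ t x| ≤ |G t x τ ξ| * Bk := by
        intro x hx
        rw [abs_mul]
        exact mul_le_mul_of_nonneg_left (ih t htI x hx) (abs_nonneg _)
      calc |∫ x in Set.Ici (0:ℝ) ×ˢ Set.Ici (0:ℝ), G t x τ ξ * (nOp G T)^[k] Ψ t x|
          ≤ ∫ x in Set.Ici (0:ℝ) ×ˢ Set.Ici (0:ℝ), |G t x τ ξ * (nOp G T)^[k] Ψ t x| := by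
            have := norm_integral_le_integral_norm
              (μ := volume.restrict (Set.Ici (0:ℝ) ×ˢ Set.Ici (0:ℝ)))
              (fun x => G t x τ ξ * (nOp G T)^[k] Ψ t x)
            simpa only [Real.norm_eq_abs] using this
        _ ≤ ∫ x in Set.Ici (0:ℝ) ×ˢ Set.Ici (0:ℝ), |G t x τ ξ| * Bk := by
            apply integral_mono_of_nonneg
              (Filter.Eventually.of_forall fun x => abs_nonneg _)
              (hGi.abs.mul_const Bk)
            filter_upwards [ae_restrict_mem hQm] with x hx using habs x hx
        _ = (∫ x in Set.Ici (0:ℝ) ×ˢ Set.Ici (0:ℝ), |G t x τ ξ|) * Bk := by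
            rw [integral_mul_const]
        _ ≤ (lam * Real.exp (-lam * (t - τ))) * Bk :=
            mul_le_mul_of_nonneg_right hGB hBk0
        _ ≤ lam * Bk := by
            have h1 : Real.exp (-lam * (t - τ)) ≤ 1 := by
              rw [Real.exp_le_one_iff]
              have : 0 ≤ lam * (t - τ) := mul_nonneg hlam (by linarith [ht.1.le])
              linarith
            have := mul_le_mul_of_nonneg_right
              (mul_le_mul_of_nonneg_left h1 hlam) hBk0
            simpa using this
        _ = lam ^ (k + 1) * M / (Nat.factorial k) * (T - t) ^ k := by
            rw [hBkdef, pow_succ]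
            field_simp
    have hIoc : ∫ t in Set.Ioc τ T, (T - t) ^ k = (T - τ) ^ (k + 1) / (k + 1) := by
      rw [← intervalIntegral.integral_of_le hτT,
        intervalIntegral.integral_comp_sub_left (fun x => x ^ k) T, sub_self, integral_pow]
      norm_num
    calc |∫ t in Set.Ioc τ T, ∫ x in Set.Ici (0:ℝ) ×ˢ Set.Ici (0:ℝ),
          G t x τ ξ * (nOp G T)^[k] Ψ t x|
        ≤ ∫ t in Set.Ioc τ T, |∫ x in Set.Ici (0:ℝ) ×ˢ Set.Ici (0:ℝ),
            G t x τ ξ * (nOp G T)^[k] Ψ t x| := by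
          have := norm_integral_le_integral_norm (μ := volume.restrict (Set.Ioc τ T))
            (fun t => ∫ x in Set.Ici (0:ℝ) ×ˢ Set.Ici (0:ℝ), G t x τ ξ * (nOp G T)^[k] Ψ t x)
          simpa only [Real.norm_eq_abs] using this
      _ ≤ ∫ t in Set.Ioc τ T, lam ^ (k + 1) * M / (Nat.factorial k) * (T - t) ^ k := by
          apply integral_mono_of_nonneg
            (Filter.Eventually.of_forall fun t => abs_nonneg _)
          · apply Integrable.const_mul
            exact (Continuous.integrableOn_Ioc (by continuity))
          · filter_upwards [ae_restrict_mem measurableSet_Ioc] with t ht using hinner t ht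
      _ = lam ^ (k + 1) * M / (Nat.factorial k) * ((T - τ) ^ (k + 1) / (k + 1)) := by
          rw [integral_const_mul, hIoc]
      _ = lam ^ (k + 1) * (T - τ) ^ (k + 1) / (Nat.factorial (k + 1)) * M := by
          rw [Nat.factorial_succ]
          push_cast
          field_simp

end part2

/-- Volterra bound underlying the Neumann series: `∫_{[0,∞)²} |G(t,x;τ,ξ)| dx ≤ λ e^{−λ(t−τ)}`
for `τ₀ ≤ τ < t ≤ T` and `ξ ∈ [0,∞)²`; consequently, for every bounded measurable `Ψ`
(with bound `M` on `[τ₀,T] × [0,∞)²`), the iterates of `𝒯` satisfy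
`‖𝒯ᵏΨ‖ ≤ λᵏ(T−τ₀)ᵏ/k! · M` for every `k ≥ 1`. -/
theorem volterra_bound
    (C₁ C₂ σ₁ σ₂ l₁ l₂ l₃ : ℝ) (hσ₁ : 0 < σ₁) (hσ₂ : 0 < σ₂)
    (hl₁ : 0 ≤ l₁) (hl₂ : 0 ≤ l₂) (hl₃ : 0 ≤ l₃)
    (p₁ p₂ : ℝ → ℝ) (hp₁m : Measurable p₁) (hp₂m : Measurable p₂)
    (hp₁ : ∀ y, 0 ≤ p₁ y) (hp₂ : ∀ y, 0 ≤ p₂ y)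
    (hp₁int : ∫ y in Set.Ici (0 : ℝ), p₁ y = 1) (hp₂int : ∫ y in Set.Ici (0 : ℝ), p₂ y = 1)
    (τ₀ T : ℝ) (hτ₀ : 0 ≤ τ₀) (hτ₀T : τ₀ < T) :
    (∀ τ t : ℝ, τ₀ ≤ τ → τ < t → t ≤ T →
      ∀ ξ ∈ Set.Ici (0 : ℝ) ×ˢ Set.Ici (0 : ℝ),
        (∫ x in Set.Ici (0 : ℝ) ×ˢ Set.Ici (0 : ℝ),
            |Gker C₁ C₂ σ₁ σ₂ l₁ l₂ l₃ p₁ p₂ t x τ ξ|)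
          ≤ (l₁ + l₂ + l₃) * Real.exp (-(l₁ + l₂ + l₃) * (t - τ))) ∧
    (∀ Ψ : ℝ → ℝ × ℝ → ℝ, Measurable (Function.uncurry Ψ) →
      ∀ M : ℝ, (∀ τ ∈ Set.Icc τ₀ T, ∀ ξ ∈ Set.Ici (0 : ℝ) ×ˢ Set.Ici (0 : ℝ), |Ψ τ ξ| ≤ M) →
      ∀ k : ℕ, 1 ≤ k →
        ∀ τ ∈ Set.Icc τ₀ T, ∀ ξ ∈ Set.Ici (0 : ℝ) ×ˢ Set.Ici (0 : ℝ),
          |(neumannOp C₁ C₂ σ₁ σ₂ l₁ l₂ l₃ T p₁ p₂)^[k] Ψ τ ξ|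
            ≤ (l₁ + l₂ + l₃) ^ k * (T - τ₀) ^ k / (Nat.factorial k) * M) := by
  constructor
  · intro τ t hτ₀τ hτt htT ξ hξ
    exact Gker_abs_integral_bound C₁ C₂ σ₁ σ₂ l₁ l₂ l₃ p₁ p₂ t τ ξ hσ₁ hσ₂ hl₁ hl₂ hl₃
      hp₁m hp₂m hp₁ hp₂ hp₁int hp₂int hτt hξ.1 hξ.2
  · intro Ψ hΨm M hM k hk τ hτ ξ hξ
    have hGb : ∀ τ t : ℝ, τ₀ ≤ τ → τ < t → t ≤ T →
        ∀ ξ ∈ Set.Ici (0:ℝ) ×ˢ Set.Ici (0:ℝ),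
        (∫ x in Set.Ici (0:ℝ) ×ˢ Set.Ici (0:ℝ), |Gker C₁ C₂ σ₁ σ₂ l₁ l₂ l₃ p₁ p₂ t x τ ξ|)
          ≤ (l₁ + l₂ + l₃) * Real.exp (-(l₁ + l₂ + l₃) * (t - τ)) :=
      fun τ t h1 h2 h3 ξ hξ => Gker_abs_integral_bound C₁ C₂ σ₁ σ₂ l₁ l₂ l₃ p₁ p₂ t τ ξ
        hσ₁ hσ₂ hl₁ hl₂ hl₃ hp₁m hp₂m hp₁ hp₂ hp₁int hp₂int h2 hξ.1 hξ.2
    have hGi : ∀ τ t : ℝ, τ₀ ≤ τ → τ < t → t ≤ T →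
        ∀ ξ ∈ Set.Ici (0:ℝ) ×ˢ Set.Ici (0:ℝ),
        Integrable (fun x => Gker C₁ C₂ σ₁ σ₂ l₁ l₂ l₃ p₁ p₂ t x τ ξ)
          (volume.restrict (Set.Ici (0:ℝ) ×ˢ Set.Ici (0:ℝ))) :=
      fun τ t h1 h2 h3 ξ hξ => Gker_integrable C₁ C₂ σ₁ σ₂ l₁ l₂ l₃ p₁ p₂ t τ ξ
        hσ₁ hσ₂ hl₁ hl₂ hl₃ hp₁m hp₂m hp₁ hp₂ hp₁int hp₂int h2 hξ.1 hξ.2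
    have hmain := part2 (fun t x τ ξ => Gker C₁ C₂ σ₁ σ₂ l₁ l₂ l₃ p₁ p₂ t x τ ξ) T τ₀
      (l₁ + l₂ + l₃) (by linarith) hGb hGi hτ₀T Ψ M hM k τ hτ ξ hξ
    have heq : nOp (fun t x τ ξ => Gker C₁ C₂ σ₁ σ₂ l₁ l₂ l₃ p₁ p₂ t x τ ξ) T
        = neumannOp C₁ C₂ σ₁ σ₂ l₁ l₂ l₃ T p₁ p₂ := rfl
    rw [heq] at hmain
    refine le_trans hmain ?_
    have hM0 : 0 ≤ M := le_trans (abs_nonneg _)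
      (hM τ₀ ⟨le_refl _, hτ₀T.le⟩ (0, 0) (by constructor <;> simp))
    apply mul_le_mul_of_nonneg_right _ hM0
    have hkfac : (0:ℝ) < (Nat.factorial k : ℝ) := by positivity
    apply (div_le_div_iff_of_pos_right hkfac).2
    apply mul_le_mul_of_nonneg_left _ (pow_nonneg (by linarith) k)
    exact pow_le_pow_left₀ (by linarith [hτ.2]) (by linarith [hτ.1]) k
end

section
/- For every fixed τ, the function F(τ,·) arising as the inhomogeneous term of the integral equation takes values in [0,1]: for all τ < T and all ξ ∈ [0,∞)², one has 0 ≤ F(τ,ξ) = ∫_{[0,∞)²} K(T,x;τ,ξ) dx ≤ exp(−λ(T−τ)) ≤ 1. -/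
open Real MeasureTheory

/-- One-dimensional factor of the kernel (with the drift term absorbed). -/
noncomputable def Hfac (C σ s ξ : ℝ) (x : ℝ) : ℝ :=
  Real.exp (C / σ ^ 2 * (x - ξ) - C ^ 2 / (2 * σ ^ 2) * s) *
    ((Real.sqrt (2 * Real.pi * σ ^ 2 * s))⁻¹ *
      (Real.exp (-(x - ξ) ^ 2 / (2 * σ ^ 2 * s)) - Real.exp (-(x + ξ) ^ 2 / (2 * σ ^ 2 * s))))

lemma Hfac_nonneg (C σ s ξ : ℝ) (hσ : 0 < σ) (hs : 0 < s) (hξ : 0 ≤ ξ) {x : ℝ} (hx : 0 ≤ x) :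
    0 ≤ Hfac C σ s ξ x := by
  have hden : 0 < 2 * σ ^ 2 * s := by positivity
  have h1 : (x - ξ) ^ 2 ≤ (x + ξ) ^ 2 := by nlinarith
  have h2 : Real.exp (-(x + ξ) ^ 2 / (2 * σ ^ 2 * s)) ≤ Real.exp (-(x - ξ) ^ 2 / (2 * σ ^ 2 * s)) := by
    apply Real.exp_le_exp.2
    apply div_le_div_of_nonneg_right (by linarith) hden.le
  unfold Hfac
  have h3 : 0 ≤ Real.exp (-(x - ξ) ^ 2 / (2 * σ ^ 2 * s)) - Real.exp (-(x + ξ) ^ 2 / (2 * σ ^ 2 * s)) :=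
    sub_nonneg.2 h2
  exact mul_nonneg (Real.exp_pos _).le (mul_nonneg (inv_nonneg.2 (Real.sqrt_nonneg _)) h3)

lemma Hfac_le_pdf (C σ s ξ : ℝ) (hσ : 0 < σ) (hs : 0 < s) (x : ℝ) :
    Hfac C σ s ξ x ≤ ProbabilityTheory.gaussianPDFReal (ξ + C * s) ⟨σ ^ 2 * s, by positivity⟩ x := by
  have hkey : Real.exp (C / σ ^ 2 * (x - ξ) - C ^ 2 / (2 * σ ^ 2) * s) *
      ((Real.sqrt (2 * Real.pi * σ ^ 2 * s))⁻¹ * Real.exp (-(x - ξ) ^ 2 / (2 * σ ^ 2 * s)))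
      = ProbabilityTheory.gaussianPDFReal (ξ + C * s) ⟨σ ^ 2 * s, by positivity⟩ x := by
    have hexp : -(x - ξ) ^ 2 / (2 * σ ^ 2 * s) + (C / σ ^ 2 * (x - ξ) - C ^ 2 / (2 * σ ^ 2) * s)
        = -(x - (ξ + C * s)) ^ 2 / (2 * ((σ ^ 2 * s : ℝ))) := by
      have h1 : σ ^ 2 ≠ 0 := by positivity
      have h2 : s ≠ 0 := hs.ne'
      field_simp
      ring
    unfold ProbabilityTheory.gaussianPDFReal
    push_cast
    rw [mul_comm, mul_assoc, ← Real.exp_add, hexp,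
      show (2 * Real.pi * σ ^ 2 * s : ℝ) = 2 * Real.pi * (σ ^ 2 * s) by ring]
    rfl
  calc Hfac C σ s ξ x ≤ Real.exp (C / σ ^ 2 * (x - ξ) - C ^ 2 / (2 * σ ^ 2) * s) *
      ((Real.sqrt (2 * Real.pi * σ ^ 2 * s))⁻¹ * Real.exp (-(x - ξ) ^ 2 / (2 * σ ^ 2 * s))) := by
        unfold Hfac
        have hE : Real.exp (-(x - ξ) ^ 2 / (2 * σ ^ 2 * s)) - Real.exp (-(x + ξ) ^ 2 / (2 * σ ^ 2 * s))
            ≤ Real.exp (-(x - ξ) ^ 2 / (2 * σ ^ 2 * s)) := by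
          have := (Real.exp_pos (-(x + ξ) ^ 2 / (2 * σ ^ 2 * s))).le
          linarith
        have hc : (0:ℝ) ≤ (Real.sqrt (2 * Real.pi * σ ^ 2 * s))⁻¹ := inv_nonneg.2 (Real.sqrt_nonneg _)
        exact mul_le_mul_of_nonneg_left (mul_le_mul_of_nonneg_left hE hc) (Real.exp_pos _).le
    _ = _ := hkey

/-- For all `τ < T` and `ξ ∈ [0,∞)²`, the inhomogeneous term satisfies
`0 ≤ F(τ,ξ) ≤ exp(−λ(T−τ)) ≤ 1`. -/
theorem Fker_mem_unit_interval
    (C₁ C₂ σ₁ σ₂ lam : ℝ) (hσ₁ : 0 < σ₁) (hσ₂ : 0 < σ₂) (hlam : 0 ≤ lam)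
    (T τ : ℝ) (hτT : τ < T) (ξ : ℝ × ℝ) (hξ : ξ ∈ Set.Ici (0 : ℝ) ×ˢ Set.Ici (0 : ℝ)) :
    0 ≤ Fker C₁ C₂ σ₁ σ₂ lam T τ ξ ∧
    Fker C₁ C₂ σ₁ σ₂ lam T τ ξ ≤ Real.exp (-lam * (T - τ)) ∧
    Real.exp (-lam * (T - τ)) ≤ 1 := by
  obtain ⟨hξ1, hξ2⟩ := hξ
  have hs : (0:ℝ) < T - τ := sub_pos.2 hτT
  set s := T - τ with hsdef
  have hK : ∀ x : ℝ × ℝ, Kker C₁ C₂ σ₁ σ₂ lam T x τ ξ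
      = Real.exp (-lam * s) * (Hfac C₁ σ₁ s ξ.1 x.1 * Hfac C₂ σ₂ s ξ.2 x.2) := by
    intro x
    unfold Kker Hfac
    rw [show (-(lam + C₁ ^ 2 / (2 * σ₁ ^ 2) + C₂ ^ 2 / (2 * σ₂ ^ 2))) * (T - τ)
        + (C₁ / σ₁ ^ 2) * (x.1 - ξ.1) + (C₂ / σ₂ ^ 2) * (x.2 - ξ.2)
        = (-lam * s) + ((C₁ / σ₁ ^ 2 * (x.1 - ξ.1) - C₁ ^ 2 / (2 * σ₁ ^ 2) * s)
          + (C₂ / σ₂ ^ 2 * (x.2 - ξ.2) - C₂ ^ 2 / (2 * σ₂ ^ 2) * s)) from by rw [hsdef]; ring,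
      Real.exp_add, Real.exp_add]
    rw [← hsdef]
    ring
  have hmeas : MeasurableSet (Set.Ici (0:ℝ) ×ˢ Set.Ici (0:ℝ)) :=
    measurableSet_Ici.prod measurableSet_Ici
  have hKnn : ∀ x ∈ Set.Ici (0:ℝ) ×ˢ Set.Ici (0:ℝ), 0 ≤ Kker C₁ C₂ σ₁ σ₂ lam T x τ ξ := by
    intro x hx
    rw [hK]
    exact mul_nonneg (Real.exp_pos _).le
      (mul_nonneg (Hfac_nonneg _ _ _ _ hσ₁ hs hξ1 hx.1) (Hfac_nonneg _ _ _ _ hσ₂ hs hξ2 hx.2))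
  have hv₁ : ((⟨σ₁ ^ 2 * s, by positivity⟩ : NNReal)) ≠ 0 := by
    have h : (0:ℝ) < σ₁ ^ 2 * s := by positivity
    exact fun hcon => h.ne' (congrArg NNReal.toReal hcon)
  have hv₂ : ((⟨σ₂ ^ 2 * s, by positivity⟩ : NNReal)) ≠ 0 := by
    have h : (0:ℝ) < σ₂ ^ 2 * s := by positivity
    exact fun hcon => h.ne' (congrArg NNReal.toReal hcon)
  set d₁ := ProbabilityTheory.gaussianPDFReal (ξ.1 + C₁ * s) ⟨σ₁ ^ 2 * s, by positivity⟩ with hd₁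
  set d₂ := ProbabilityTheory.gaussianPDFReal (ξ.2 + C₂ * s) ⟨σ₂ ^ 2 * s, by positivity⟩ with hd₂
  have hint : Integrable (fun p : ℝ × ℝ => d₁ p.1 * d₂ p.2) := by
    rw [Measure.volume_eq_prod]
    exact (ProbabilityTheory.integrable_gaussianPDFReal _ _).mul_prod
      (ProbabilityTheory.integrable_gaussianPDFReal _ _)
  have hdnn : ∀ p : ℝ × ℝ, 0 ≤ d₁ p.1 * d₂ p.2 := fun p =>
    mul_nonneg (ProbabilityTheory.gaussianPDFReal_nonneg _ _ _)
      (ProbabilityTheory.gaussianPDFReal_nonneg _ _ _)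
  have hmain : (∫ x in Set.Ici (0:ℝ) ×ˢ Set.Ici (0:ℝ), Hfac C₁ σ₁ s ξ.1 x.1 * Hfac C₂ σ₂ s ξ.2 x.2)
      ≤ 1 := by
    calc (∫ x in Set.Ici (0:ℝ) ×ˢ Set.Ici (0:ℝ), Hfac C₁ σ₁ s ξ.1 x.1 * Hfac C₂ σ₂ s ξ.2 x.2)
        ≤ ∫ x in Set.Ici (0:ℝ) ×ˢ Set.Ici (0:ℝ), d₁ x.1 * d₂ x.2 := by
          apply integral_mono_of_nonneg
          · filter_upwards [ae_restrict_mem hmeas] with x hx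
            exact mul_nonneg (Hfac_nonneg _ _ _ _ hσ₁ hs hξ1 hx.1)
              (Hfac_nonneg _ _ _ _ hσ₂ hs hξ2 hx.2)
          · exact hint.restrict
          · filter_upwards [ae_restrict_mem hmeas] with x hx
            exact mul_le_mul (Hfac_le_pdf _ _ _ _ hσ₁ hs x.1) (Hfac_le_pdf _ _ _ _ hσ₂ hs x.2)
              (Hfac_nonneg _ _ _ _ hσ₂ hs hξ2 hx.2)
              (ProbabilityTheory.gaussianPDFReal_nonneg _ _ _)
      _ ≤ ∫ x : ℝ × ℝ, d₁ x.1 * d₂ x.2 :=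
          setIntegral_le_integral hint (ae_of_all _ hdnn)
      _ = (∫ x, d₁ x) * (∫ x, d₂ x) := by
          rw [Measure.volume_eq_prod]
          exact integral_prod_mul d₁ d₂
      _ = 1 := by
          rw [ProbabilityTheory.integral_gaussianPDFReal_eq_one _ hv₁,
            ProbabilityTheory.integral_gaussianPDFReal_eq_one _ hv₂, mul_one]
  refine ⟨setIntegral_nonneg hmeas hKnn, ?_, ?_⟩
  · have : Fker C₁ C₂ σ₁ σ₂ lam T τ ξ
        = Real.exp (-lam * s) *
          ∫ x in Set.Ici (0:ℝ) ×ˢ Set.Ici (0:ℝ), Hfac C₁ σ₁ s ξ.1 x.1 * Hfac C₂ σ₂ s ξ.2 x.2 := by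
      unfold Fker
      simp only [hK]
      exact integral_const_mul _ _
    rw [this]
    calc Real.exp (-lam * s) * _ ≤ Real.exp (-lam * s) * 1 :=
          mul_le_mul_of_nonneg_left hmain (Real.exp_pos _).le
      _ = Real.exp (-lam * s) := mul_one _
  · apply Real.exp_le_one_iff.2
    nlinarith
end
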